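/- arXiv:1408.0937 — 5 statements merged into one kernel-verified Lean document; each statement's English description precedes it below -/
import Mathlib

section
/- If q ≡ 1 (mod 4) and f, g are monic polynomials in F_q[t] with g squarefree and coprime to f, then the quadratic residue symbol satisfies reciprocity: (f/g) = (g/f). -/
open scoped Classical

/-- The quadratic residue (Legendre) symbol `(f/p)` for `p` a prime (irreducible) polynomial:
`0` if `p ∣ f`, `1` if `f` is a nonzero square mod `p`, and `-1` otherwise. -/
noncomputable def legendrePoly {F : Type} [Field F] (f p : Polynomial F) : ℤ :=
  if p ∣ f then 0 else if ∃ h : Polynomial F, p ∣ (h ^ 2 - f) then 1 else -1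

/-- The quadratic residue symbol `(f/g)`, extended multiplicatively in `g` over the
prime factorization of `g`. -/
noncomputable def resSym {F : Type} [Field F] (f g : Polynomial F) : ℤ :=
  ((UniqueFactorizationMonoid.normalizedFactors g).map (fun p => legendrePoly f p)).prod

set_option linter.unusedVariables false
set_option linter.unusedSectionVars false

open Polynomial AdjoinRoot UniqueFactorizationMonoid

section Aux

variable {F : Type} [Field F] [Fintype F]


/-- Frobenius powers as `F`-algebra endomorphisms of a finite extension. -/
noncomputable def frobHom (K : Type) [Field K] [Fintype K] [Algebra F K] (i : ℕ) :
    K →ₐ[F] K where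
  toFun x := x ^ (Fintype.card F) ^ i
  map_one' := one_pow _
  map_mul' x y := mul_pow x y _
  map_zero' := zero_pow (pow_ne_zero i Fintype.card_ne_zero)
  map_add' x y := by
    obtain ⟨p, hchar⟩ := CharP.exists F
    haveI : CharP F p := hchar
    haveI hp : Fact p.Prime := ⟨CharP.char_is_prime F p⟩
    haveI : CharP K p := charP_of_injective_algebraMap (algebraMap F K).injective p
    obtain ⟨n, hn, hcard⟩ := FiniteField.card F p
    simp only [hcard, ← pow_mul]
    exact add_pow_char_pow x y p ((n : ℕ) * i)
  commutes' a := by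
    show (algebraMap F K a) ^ (Fintype.card F) ^ i = algebraMap F K a
    rw [← map_pow, FiniteField.pow_card_pow]

lemma norm_pow_formula {K : Type} [Field K] [Fintype K] [Algebra F K] (x : K) :
    algebraMap F K (Algebra.norm F x) =
      x ^ ∑ i ∈ Finset.range (Module.finrank F K), (Fintype.card F) ^ i := by
  haveI : Module.Finite F K := Module.finite_iff_finite.mpr inferInstance
  set q := Fintype.card F with hq
  set d := Module.finrank F K with hd
  have hq2 : 2 ≤ q := Fintype.one_lt_card
  have hd1 : 1 ≤ d := Module.finrank_pos
  have hcardK : Fintype.card K = q ^ d := Module.card_eq_pow_finrank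
  -- the Frobenius automorphisms
  have hbij : ∀ i : ℕ, Function.Bijective (frobHom (F := F) K i) := fun i =>
    Finite.injective_iff_bijective.mp (frobHom (F := F) K i).toRingHom.injective
  let τ : Fin d → (K ≃ₐ[F] K) := fun i => AlgEquiv.ofBijective _ (hbij i)
  have hτ : ∀ (i : Fin d) (y : K), τ i y = y ^ q ^ (i : ℕ) := fun i y => rfl
  -- injectivity
  have hinj : Function.Injective τ := by
    intro i j hij
    by_contra hne
    wlog hlt : (i : ℕ) < (j : ℕ) generalizing i j
    · exact this (i := j) (j := i) hij.symm (Ne.symm hne) (by omega)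
    obtain ⟨g, hg⟩ := IsCyclic.exists_generator (α := Kˣ)
    have horder : orderOf g = q ^ d - 1 := by
      rw [orderOf_eq_card_of_forall_mem_zpowers hg, Nat.card_eq_fintype_card,
        Fintype.card_units, hcardK]
    have hgg : (g : K) ^ q ^ (i : ℕ) = (g : K) ^ q ^ (j : ℕ) := by
      have := congrArg (fun e : K ≃ₐ[F] K => e (g : K)) hij
      simpa [hτ] using this
    have hmod : q ^ (i : ℕ) ≡ q ^ (j : ℕ) [MOD orderOf g] := by
      rw [← pow_eq_pow_iff_modEq]
      exact_mod_cast Units.ext (by exact_mod_cast hgg)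
    have h1 : q ^ (i : ℕ) < q ^ (j : ℕ) := Nat.pow_lt_pow_right hq2 hlt
    have hdvd : (q ^ d - 1) ∣ q ^ (j : ℕ) - q ^ (i : ℕ) :=
      (Nat.modEq_iff_dvd' h1.le).mp (horder ▸ hmod)
    have h2 : q ^ (j : ℕ) ≤ q ^ (d - 1) := Nat.pow_le_pow_right (by omega) (by omega)
    have h3 : q ^ (d - 1) < q ^ d := Nat.pow_lt_pow_right hq2 (by omega)
    have h4 : 1 ≤ q ^ (i : ℕ) := Nat.one_le_pow _ _ (by omega)
    have := Nat.le_of_dvd (by omega) hdvd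
    omega
  have hcards : Fintype.card (Fin d) = Fintype.card (K ≃ₐ[F] K) := by
    rw [Fintype.card_fin, ← Nat.card_eq_fintype_card, IsGalois.card_aut_eq_finrank]
  let e : Fin d ≃ (K ≃ₐ[F] K) :=
    Equiv.ofBijective τ ((Fintype.bijective_iff_injective_and_card τ).mpr ⟨hinj, hcards⟩)
  rw [Algebra.norm_eq_prod_automorphisms]
  rw [← Equiv.prod_comp e (fun σ => σ x)]
  have : ∀ i : Fin d, e i x = x ^ q ^ (i : ℕ) := fun i => rfl
  simp_rw [this]
  rw [Finset.prod_pow_eq_pow_sum, Fin.sum_univ_eq_sum_range]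


lemma quadraticChar_norm {K : Type} [Field K] [Fintype K] [Algebra F K]
    (hF2 : ringChar F ≠ 2) (x : K) :
    quadraticChar F (Algebra.norm F x) = quadraticChar K x := by
  haveI : Module.Finite F K := Module.finite_iff_finite.mpr inferInstance
  set q := Fintype.card F with hq
  set d := Module.finrank F K with hd
  have hq2 : 2 ≤ q := Fintype.one_lt_card
  have hd1 : 1 ≤ d := Module.finrank_pos
  have hcardK : Fintype.card K = q ^ d := Module.card_eq_pow_finrank
  by_cases hx : x = 0
  · subst hx
    rw [Algebra.norm_zero, quadraticChar_zero, quadraticChar_zero]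
  have hN : Algebra.norm F x ≠ 0 := Algebra.norm_ne_zero_iff.mpr hx
  have hK2 : ringChar K ≠ 2 := by
    haveI : CharP K (ringChar F) :=
      charP_of_injective_algebraMap (algebraMap F K).injective (ringChar F)
    rwa [ringChar.eq K (ringChar F)]
  rw [quadraticChar_apply, quadraticChar_apply,
    quadraticCharFun_eq_pow_of_char_ne_two hF2 hN,
    quadraticCharFun_eq_pow_of_char_ne_two hK2 hx]
  have hqodd : q % 2 = 1 := by
    have := FiniteField.even_card_iff_char_two (F := F)
    rw [← hq] at this
    omega
  have hQodd : Fintype.card K % 2 = 1 := by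
    rw [hcardK, Nat.pow_mod, hqodd, Nat.one_pow]
  set s : ℕ := ∑ i ∈ Finset.range d, q ^ i with hs
  have hgeom : s * (q - 1) = q ^ d - 1 := by
    have h1 : 1 ≤ q ^ d := Nat.one_le_pow _ _ (by omega)
    have := geom_sum_mul (q : ℤ) d
    have h2 : ((s : ℤ)) * ((q : ℤ) - 1) = (q : ℤ) ^ d - 1 := by
      rw [hs]; push_cast; exact this
    have h3 : ((s * (q - 1) : ℕ) : ℤ) = ((q ^ d - 1 : ℕ) : ℤ) := by
      push_cast [Nat.cast_sub (by omega : 1 ≤ q), Nat.cast_sub h1]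
      exact h2
    exact_mod_cast h3
  have hexp : s * (q / 2) = Fintype.card K / 2 := by
    have h1 : q - 1 = 2 * (q / 2) := by omega
    rw [h1] at hgeom
    have h2 : 2 * (s * (q / 2)) = q ^ d - 1 := by ring_nf; ring_nf at hgeom; omega
    have h3 : 1 ≤ q ^ d := Nat.one_le_pow _ _ (by omega)
    rw [hcardK]
    have h4 : q ^ d % 2 = 1 := by rw [Nat.pow_mod, hqodd, Nat.one_pow]
    omega
  have hcond : (Algebra.norm F x) ^ (q / 2) = 1 ↔ x ^ (Fintype.card K / 2) = 1 := by
    constructor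
    · intro h
      have := congrArg (algebraMap F K) h
      rw [map_pow, map_one, norm_pow_formula, ← pow_mul, hexp] at this
      exact this
    · intro h
      apply (algebraMap F K).injective
      rw [map_pow, map_one, norm_pow_formula, ← pow_mul, hexp, h]
  rw [if_congr hcond rfl rfl]





lemma legendrePoly_eq_char (hF2 : ringChar F ≠ 2) (p f : Polynomial F)
    (hp : Irreducible p) :
    legendrePoly f p = quadraticChar F (Algebra.norm F (AdjoinRoot.mk p f)) := by
  haveI : Fact (Irreducible p) := ⟨hp⟩
  haveI : Module.Finite F (AdjoinRoot p) := (AdjoinRoot.powerBasis hp.ne_zero).finite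
  haveI : Finite (AdjoinRoot p) := Module.finite_of_finite F
  haveI : Fintype (AdjoinRoot p) := Fintype.ofFinite _
  rw [quadraticChar_norm hF2, quadraticChar_apply, quadraticCharFun, legendrePoly]
  by_cases hpf : p ∣ f
  · rw [if_pos hpf, if_pos (mk_eq_zero.mpr hpf)]
  · rw [if_neg hpf, if_neg (fun h => hpf (mk_eq_zero.mp h))]
    have hiff : (∃ h : Polynomial F, p ∣ (h ^ 2 - f)) ↔ IsSquare (AdjoinRoot.mk p f) := by
      constructor
      · rintro ⟨h, hdvd⟩
        refine ⟨AdjoinRoot.mk p h, ?_⟩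
        have := mk_eq_zero.mpr hdvd
        rw [map_sub, map_pow, sub_eq_zero] at this
        rw [← this, sq]
      · rintro ⟨y, hy⟩
        obtain ⟨h, rfl⟩ := AdjoinRoot.mk_surjective y
        exact ⟨h, mk_eq_zero.mp (by rw [map_sub, map_pow, sub_eq_zero, sq]; exact hy.symm)⟩
    rw [if_congr hiff rfl rfl]

lemma embProd (p f : Polynomial F) (hp : Irreducible p) :
    algebraMap F (AlgebraicClosure F) (Algebra.norm F (AdjoinRoot.mk p f)) =
      ((p.aroots (AlgebraicClosure F)).map
        fun α => (f.map (algebraMap F (AlgebraicClosure F))).eval α).prod := by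
  set Ω := AlgebraicClosure F
  haveI : Fact (Irreducible p) := ⟨hp⟩
  haveI : Module.Finite F (AdjoinRoot p) := (AdjoinRoot.powerBasis hp.ne_zero).finite
  haveI : Finite (AdjoinRoot p) := Module.finite_of_finite F
  rw [← AdjoinRoot.aeval_eq, Algebra.norm_eq_prod_embeddings]
  have h1 : ∀ σ : AdjoinRoot p →ₐ[F] Ω,
      σ (aeval (AdjoinRoot.root p) f) = (f.map (algebraMap F Ω)).eval (σ (AdjoinRoot.root p)) :=
    fun σ => by rw [← aeval_algHom_apply, aeval_def, eval_map]
  simp_rw [h1]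
  let e := AdjoinRoot.equiv Ω F p hp.ne_zero
  have h2 : ∀ σ : AdjoinRoot p →ₐ[F] Ω, σ (AdjoinRoot.root p) = ((e σ : Ω)) := fun σ => rfl
  simp_rw [h2]
  rw [Equiv.prod_comp e (fun r => (f.map (algebraMap F Ω)).eval ((r : Ω)))]
  · rw [Finset.prod_mem_multiset (p.aroots Ω)
      (fun r => (f.map (algebraMap F Ω)).eval ((r : Ω)))
      (fun x => (f.map (algebraMap F Ω)).eval x) (fun _ => rfl)]
    rw [Finset.prod_eq_multiset_prod]
    have hnodup : (p.aroots Ω).Nodup :=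
      nodup_roots ((PerfectField.separable_of_irreducible hp).map)
    rw [Multiset.toFinset_val, Multiset.dedup_eq_self.mpr hnodup]




lemma eval_eq_prod_sub (g : Polynomial F) (hg : g.Monic) (α : AlgebraicClosure F) :
    (g.map (algebraMap F (AlgebraicClosure F))).eval α =
      ((g.aroots (AlgebraicClosure F)).map fun β => α - β).prod := by
  set Ω := AlgebraicClosure F
  have hsplit : (g.map (algebraMap F Ω)).Splits :=
    IsAlgClosed.splits _
  conv_lhs => rw [hsplit.eq_prod_roots_of_monic (hg.map _)]
  rw [eval_multiset_prod, Multiset.map_map]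
  simp [aroots_def, Ω]

lemma norm_swap (p ℓ : Polynomial F) (hp : Irreducible p) (hpm : p.Monic)
    (hl : Irreducible ℓ) (hlm : ℓ.Monic) :
    Algebra.norm F (AdjoinRoot.mk ℓ p) =
      (-1) ^ (p.natDegree * ℓ.natDegree) * Algebra.norm F (AdjoinRoot.mk p ℓ) := by
  set Ω := AlgebraicClosure F
  apply (algebraMap F Ω).injective
  rw [map_mul, map_pow, map_neg, map_one, embProd p ℓ hp, embProd ℓ p hl]
  have hcard_p : (p.aroots Ω).card = p.natDegree :=
    by rw [aroots_def, ← (IsAlgClosed.splits (p.map (algebraMap F Ω))).natDegree_eq_card_roots, natDegree_map]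
  have hcard_l : (ℓ.aroots Ω).card = ℓ.natDegree :=
    by rw [aroots_def, ← (IsAlgClosed.splits (ℓ.map (algebraMap F Ω))).natDegree_eq_card_roots, natDegree_map]
  calc ((ℓ.aroots Ω).map fun β => (p.map (algebraMap F Ω)).eval β).prod
      = ((ℓ.aroots Ω).map fun β => ((p.aroots Ω).map fun α => β - α).prod).prod := by
        simp_rw [Ω, eval_eq_prod_sub p hpm]
    _ = ((p.aroots Ω).map fun α => ((ℓ.aroots Ω).map fun β => β - α).prod).prod := by
        rw [Multiset.prod_map_prod_map]
    _ = (-1) ^ (p.natDegree * ℓ.natDegree) *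
        ((p.aroots Ω).map fun α => ((ℓ.aroots Ω).map fun β => α - β).prod).prod := by
        have step : ∀ α : Ω, ((ℓ.aroots Ω).map fun β => β - α).prod =
            (-1) ^ ℓ.natDegree * ((ℓ.aroots Ω).map fun β => α - β).prod := by
          intro α
          have : (fun β : Ω => β - α) = fun β : Ω => (-1) * (α - β) := by funext β; ring
          rw [this, Multiset.prod_map_mul, Multiset.map_const', Multiset.prod_replicate, hcard_l]
        simp_rw [step]
        rw [Multiset.prod_map_mul, Multiset.map_const', Multiset.prod_replicate, hcard_p,
          ← pow_mul, mul_comm ℓ.natDegree p.natDegree]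
    _ = (-1) ^ (p.natDegree * ℓ.natDegree) *
        ((p.aroots Ω).map fun α => (ℓ.map (algebraMap F Ω)).eval α).prod := by
        simp_rw [Ω, eval_eq_prod_sub ℓ hlm]





lemma char_norm_swap (hq : Fintype.card F % 4 = 1) (p ℓ : Polynomial F)
    (hp : Irreducible p) (hpm : p.Monic) (hl : Irreducible ℓ) (hlm : ℓ.Monic) :
    quadraticChar F (Algebra.norm F (AdjoinRoot.mk ℓ p)) =
      quadraticChar F (Algebra.norm F (AdjoinRoot.mk p ℓ)) := by
  have hm1 : quadraticChar F (-1 : F) = 1 :=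
    (quadraticChar_one_iff_isSquare (neg_ne_zero.mpr one_ne_zero)).mpr
      (FiniteField.isSquare_neg_one_iff.mpr (by omega))
  rw [norm_swap p ℓ hp hpm hl hlm, map_mul, map_pow, hm1, one_pow, one_mul]

lemma monic_of_mem_normalizedFactors {a p : Polynomial F} (ha : a ≠ 0)
    (hp : p ∈ normalizedFactors a) : p.Monic := by
  have h0 : p ≠ 0 := (irreducible_of_normalized_factor p hp).ne_zero
  have := normalize_normalized_factor p hp
  rw [← this]
  exact monic_normalize h0

lemma prod_normalizedFactors_of_monic {a : Polynomial F} (ha : a.Monic) :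
    (normalizedFactors a).prod = a := by
  have h0 : a ≠ 0 := ha.ne_zero
  refine eq_of_monic_of_associated ?_ ha (prod_normalizedFactors h0)
  have : ((normalizedFactors a).map id).prod.Monic :=
    monic_multiset_prod_of_monic _ _ fun p hp => monic_of_mem_normalizedFactors h0 hp
  simpa using this

lemma resSym_eq_double (hF2 : ringChar F ≠ 2) {a b : Polynomial F}
    (haM : a.Monic) (hbM : b.Monic) :
    resSym a b = ((normalizedFactors b).map fun ℓ => ((normalizedFactors a).map
      fun p => quadraticChar F (Algebra.norm F (AdjoinRoot.mk ℓ p))).prod).prod := by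
  rw [resSym]
  apply congrArg Multiset.prod
  apply Multiset.map_congr rfl
  intro ℓ hℓ
  have hlirr : Irreducible ℓ := irreducible_of_normalized_factor ℓ hℓ
  rw [legendrePoly_eq_char hF2 ℓ a hlirr]
  conv_lhs => rw [← prod_normalizedFactors_of_monic haM]
  rw [map_multiset_prod (AdjoinRoot.mk ℓ),
    map_multiset_prod (Algebra.norm F : AdjoinRoot ℓ →* F),
    map_multiset_prod (quadraticChar F), Multiset.map_map, Multiset.map_map]
  rfl

end Aux

/-- Quadratic reciprocity in `F_q[t]` for `q ≡ 1 mod 4`: for `f, g` monic with `g`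
squarefree and coprime to `f`, `(f/g) = (g/f)`. -/
theorem stmt_3 (F : Type) [Field F] [Fintype F] (hq : Fintype.card F % 4 = 1)
    (f g : Polynomial F) (hf : f.Monic) (hg : g.Monic) (hsq : Squarefree g)
    (hco : IsCoprime f g) :
    resSym f g = resSym g f := by
  have hF2 : ringChar F ≠ 2 := by
    intro h
    have := FiniteField.even_card_iff_char_two.mp h
    omega
  rw [resSym_eq_double hF2 hf hg, resSym_eq_double hF2 hg hf]
  rw [Multiset.prod_map_prod_map]
  apply congrArg Multiset.prod
  apply Multiset.map_congr rfl
  intro p hp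
  apply congrArg Multiset.prod
  apply Multiset.map_congr rfl
  intro ℓ hℓ
  exact char_norm_swap hq p ℓ (irreducible_of_normalized_factor p hp)
    (monic_of_mem_normalizedFactors hf.ne_zero hp)
    (irreducible_of_normalized_factor ℓ hℓ)
    (monic_of_mem_normalizedFactors hg.ne_zero hℓ)
end

section
/- Suppose a family of complex coefficients c(a_0,...,a_n) indexed by (n+1)-tuples of nonnegative integers (indices mod n+1) satisfies, for every i and all indices: if a_{i-1} + a_{i+1} is odd then c(..., a_i, ...) = q^{a_i - (a_{i-1}+a_{i+1}-1)/2} c(..., a_{i-1}+a_{i+1}-1-a_i, ...), and if a_{i-1}+a_{i+1} is even then c(..., a_i, ...) = q·c(..., a_i - 1, ...) + q^{a_i - (a_{i-1}+a_{i+1})/2} (c(..., a_{i-1}+a_{i+1}-a_i, ...) - q·c(..., a_{i-1}+a_{i+1}-a_i-1, ...)) whenever a_i ≥ 1. Then c is uniquely determined by its diagonal values c(a, a, ..., a): if two such families agree on the diagonal, they are equal. -/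
lemma aux_peak {N : ℕ} [NeZero N] (a : ZMod N → ℤ) (h : ¬ ∀ j, a j = a 0) :
    ∃ i, a (i - 1) + a (i + 1) < 2 * a i := by
  obtain ⟨i0, hi0⟩ := Finite.exists_max a
  by_contra hcon
  push_neg at hcon
  have claim : ∀ k : ℕ, a (i0 + (k : ZMod N)) = a i0 := by
    intro k
    induction k with
    | zero => simp
    | succ k ih =>
      have h1 := hcon (i0 + (k : ZMod N))
      have h2 := hi0 (i0 + (k : ZMod N) - 1)
      have h3 := hi0 (i0 + (k : ZMod N) + 1)
      have h4 : a (i0 + (k : ZMod N) + 1) = a i0 := by omega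
      have : i0 + ((k + 1 : ℕ) : ZMod N) = i0 + (k : ZMod N) + 1 := by push_cast; ring
      rw [this, h4]
  apply h
  intro j
  have hgen : ∀ x : ZMod N, a x = a i0 := by
    intro x
    have : i0 + (((x - i0).val : ℕ) : ZMod N) = x := by
      rw [ZMod.natCast_val, ZMod.cast_id]; ring
    rw [← this]; exact claim _
  rw [hgen j, hgen 0]

/-- Coefficient families satisfying the `σ_i` recurrences (for the `Ã_n` functional
equations) are uniquely determined by their diagonal values. Coefficients are indexed by
`(n+1)`-tuples of integers (indices mod `n+1`), with coefficients having a negative entry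
interpreted as `0`. -/
theorem stmt_9 (n : ℕ) (hn : 2 ≤ n) (q : ℂ) (hq : q ≠ 0)
    (c c' : (ZMod (n + 1) → ℤ) → ℂ)
    (hneg : ∀ a : ZMod (n + 1) → ℤ, (∃ j, a j < 0) → c a = 0)
    (hneg' : ∀ a : ZMod (n + 1) → ℤ, (∃ j, a j < 0) → c' a = 0)
    (hodd : ∀ a : ZMod (n + 1) → ℤ, (∀ j, 0 ≤ a j) → ∀ i, Odd (a (i - 1) + a (i + 1)) →
      c a = q ^ (a i - (a (i - 1) + a (i + 1) - 1) / 2) *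
        c (Function.update a i (a (i - 1) + a (i + 1) - 1 - a i)))
    (hodd' : ∀ a : ZMod (n + 1) → ℤ, (∀ j, 0 ≤ a j) → ∀ i, Odd (a (i - 1) + a (i + 1)) →
      c' a = q ^ (a i - (a (i - 1) + a (i + 1) - 1) / 2) *
        c' (Function.update a i (a (i - 1) + a (i + 1) - 1 - a i)))
    (heven : ∀ a : ZMod (n + 1) → ℤ, (∀ j, 0 ≤ a j) → ∀ i, Even (a (i - 1) + a (i + 1)) →
      1 ≤ a i →
      c a = q * c (Function.update a i (a i - 1)) +
        q ^ (a i - (a (i - 1) + a (i + 1)) / 2) *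
          (c (Function.update a i (a (i - 1) + a (i + 1) - a i)) -
            q * c (Function.update a i (a (i - 1) + a (i + 1) - a i - 1))))
    (heven' : ∀ a : ZMod (n + 1) → ℤ, (∀ j, 0 ≤ a j) → ∀ i, Even (a (i - 1) + a (i + 1)) →
      1 ≤ a i →
      c' a = q * c' (Function.update a i (a i - 1)) +
        q ^ (a i - (a (i - 1) + a (i + 1)) / 2) *
          (c' (Function.update a i (a (i - 1) + a (i + 1) - a i)) -
            q * c' (Function.update a i (a (i - 1) + a (i + 1) - a i - 1))))
    (hdiag : ∀ m : ℤ, c (fun _ => m) = c' (fun _ => m)) :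
    c = c' := by
  have key : ∀ m : ℕ, ∀ a : ZMod (n + 1) → ℤ, (∀ j, 0 ≤ a j) →
      (∑ j, a j) = (m : ℤ) → c a = c' a := by
    intro m
    induction m using Nat.strong_induction_on with
    | _ m IH =>
      intro a ha hsum
      by_cases hconst : ∀ j, a j = a 0
      · have hae : a = fun _ => a 0 := funext hconst
        rw [hae]; exact hdiag _
      · obtain ⟨i, hi⟩ := aux_peak a hconst
        have hsub : ∀ b : ℤ, b < a i →
            c (Function.update a i b) = c' (Function.update a i b) := by
          intro b hb
          by_cases hbneg : b < 0
          · rw [hneg _ ⟨i, by simpa using hbneg⟩, hneg' _ ⟨i, by simpa using hbneg⟩]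
          · push_neg at hbneg
            have hnn : ∀ j, 0 ≤ Function.update a i b j := by
              intro j
              rcases eq_or_ne j i with rfl | hj
              · simpa using hbneg
              · simpa [Function.update_of_ne hj] using ha j
            have h1 : ∑ j, Function.update a i b j
                = b + ∑ x ∈ Finset.univ \ {i}, a x :=
              Finset.sum_update_of_mem (Finset.mem_univ i) a b
            have h2 : ∑ j, a j = (∑ x ∈ Finset.univ \ {i}, a x) + a i :=
              Finset.sum_eq_sum_sdiff_singleton_add (Finset.mem_univ i) a
            have hs : ∑ j, Function.update a i b j = (m : ℤ) - (a i - b) := by omega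
            have hnn0 : (0 : ℤ) ≤ (m : ℤ) - (a i - b) := hs ▸ Finset.sum_nonneg fun j _ => hnn j
            have hmlt : ((m : ℤ) - (a i - b)).toNat < m := by omega
            exact IH _ hmlt _ hnn (by rw [hs]; omega)
        rcases Int.even_or_odd (a (i - 1) + a (i + 1)) with hev | hod
        · have hai : 1 ≤ a i := by
            have := ha (i - 1); have := ha (i + 1); omega
          rw [heven a ha i hev hai, heven' a ha i hev hai,
            hsub (a i - 1) (by omega),
            hsub (a (i - 1) + a (i + 1) - a i) (by omega),
            hsub (a (i - 1) + a (i + 1) - a i - 1) (by omega)]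
        · rw [hodd a ha i hod, hodd' a ha i hod,
            hsub (a (i - 1) + a (i + 1) - 1 - a i) (by omega)]
  funext a
  by_cases hng : ∃ j, a j < 0
  · rw [hneg a hng, hneg' a hng]
  · push_neg at hng
    have h0 : (0 : ℤ) ≤ ∑ j, a j := Finset.sum_nonneg fun j _ => hng j
    exact key (∑ j, a j).toNat a hng (Int.toNat_of_nonneg h0).symm
end

section
/- Consider the formal power series identity defining the cocycle: (1/16) Σ_{ε_1,ε_2,ε_3 ∈ {±1}} ε_2 ε_3 q² x^(-4) (ε_1ε_2ε_3 q^(-1/2) - (1 - ε_2ε_3 q^(-1) x)/(1 - ε_2ε_3 x)) (ε_3 q^(-1/2) - (1 - ε_1 q^(-1/2) x)/(1 - ε_1 q^(1/2) x)) (ε_2 q^(-1/2) - (1 - ε_1 q^(-1/2) x)/(1 - ε_1 q^(1/2) x)) (ε_1 q^(-1/2) - (1 - x)/(1 - q x)) = (1 - x^(-2))(1 - q x^(-2)) / ((1 - x²)(1 - q x²)), as an identity of rational functions in x and q^(1/2). -/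
open scoped Classical

/-- The field `ℚ(x, s)` of rational functions in two indeterminates, with `s = q^{1/2}`. -/
noncomputable abbrev RF := FractionRing (MvPolynomial (Fin 2) ℚ)

noncomputable def rfX : RF := algebraMap (MvPolynomial (Fin 2) ℚ) RF (MvPolynomial.X 0)

noncomputable def rfS : RF := algebraMap (MvPolynomial (Fin 2) ℚ) RF (MvPolynomial.X 1)

lemma amap_ne_zero' (p : MvPolynomial (Fin 2) ℚ)
    (h : MvPolynomial.eval (fun i => if i = 0 then (1/2:ℚ) else 1/3) p ≠ 0) :
    algebraMap (MvPolynomial (Fin 2) ℚ) RF p ≠ 0 := by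
  intro hc
  apply h
  have : p = 0 := IsFractionRing.injective (MvPolynomial (Fin 2) ℚ) RF (by simpa using hc)
  simp [this]

lemma bracket1 {K : Type*} [Field K] (x s e₁ e₂ e₃ : K) (hs : s ≠ 0)
    (hd1 : 1 - e₂ * e₃ * x ≠ 0) :
    (e₁ * e₂ * e₃ * s⁻¹ - (1 - e₂ * e₃ * (s ^ 2)⁻¹ * x) / (1 - e₂ * e₃ * x))
    = (e₁ * e₂ * e₃ * s * (1 - e₂ * e₃ * x) - (s ^ 2 - e₂ * e₃ * x)) /
        (s ^ 2 * (1 - e₂ * e₃ * x)) := by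
  field_simp

lemma bracket2 {K : Type*} [Field K] (x s e₁ c : K) (hs : s ≠ 0)
    (hd2 : 1 - e₁ * s * x ≠ 0) :
    (c * s⁻¹ - (1 - e₁ * s⁻¹ * x) / (1 - e₁ * s * x))
    = (c * (1 - e₁ * s * x) - (s - e₁ * x)) / (s * (1 - e₁ * s * x)) := by
  have hd2' : 1 - s * e₁ * x ≠ 0 := by rwa [mul_comm s e₁]
  field_simp

lemma bracket4 {K : Type*} [Field K] (x s e₁ : K) (hs : s ≠ 0)
    (hd3 : 1 - s ^ 2 * x ≠ 0) :
    (e₁ * s⁻¹ - (1 - x) / (1 - s ^ 2 * x))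
    = (e₁ * (1 - s ^ 2 * x) - s * (1 - x)) / (s * (1 - s ^ 2 * x)) := by
  field_simp

set_option maxHeartbeats 1000000 in
lemma term_eq {K : Type*} [Field K] (x s e₁ e₂ e₃ : K) (hx : x ≠ 0) (hs : s ≠ 0)
    (hd1 : 1 - e₂ * e₃ * x ≠ 0) (hd2 : 1 - e₁ * s * x ≠ 0)
    (hd3 : 1 - s ^ 2 * x ≠ 0) :
    e₂ * e₃ * s ^ 4 * (x⁻¹) ^ 4 *
      (e₁ * e₂ * e₃ * s⁻¹ -
        (1 - e₂ * e₃ * (s ^ 2)⁻¹ * x) / (1 - e₂ * e₃ * x)) *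
      (e₃ * s⁻¹ - (1 - e₁ * s⁻¹ * x) / (1 - e₁ * s * x)) *
      (e₂ * s⁻¹ - (1 - e₁ * s⁻¹ * x) / (1 - e₁ * s * x)) *
      (e₁ * s⁻¹ - (1 - x) / (1 - s ^ 2 * x))
    = e₂ * e₃ *
        ((e₁ * e₂ * e₃ * s * (1 - e₂ * e₃ * x) - (s ^ 2 - e₂ * e₃ * x)) *
         (e₃ * (1 - e₁ * s * x) - (s - e₁ * x)) *
         (e₂ * (1 - e₁ * s * x) - (s - e₁ * x)) *
         (e₁ * (1 - s ^ 2 * x) - s * (1 - x))) /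
        (s * x ^ 4 * ((1 - e₂ * e₃ * x) * (1 - e₁ * s * x) ^ 2 * (1 - s ^ 2 * x))) := by
  rw [bracket1 x s e₁ e₂ e₃ hs hd1, bracket2 x s e₁ e₃ hs hd2, bracket2 x s e₁ e₂ hs hd2,
    bracket4 x s e₁ hs hd3, inv_pow, ← div_eq_mul_inv, div_mul_div_comm, div_mul_div_comm,
    div_mul_div_comm, div_mul_div_comm, div_eq_div_iff (by
      exact mul_ne_zero (mul_ne_zero (mul_ne_zero (mul_ne_zero (pow_ne_zero 4 hx)
        (mul_ne_zero (pow_ne_zero 2 hs) hd1)) (mul_ne_zero hs hd2))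
        (mul_ne_zero hs hd2)) (mul_ne_zero hs hd3)) (by
      exact mul_ne_zero (mul_ne_zero hs (pow_ne_zero 4 hx))
        (mul_ne_zero (mul_ne_zero hd1 (pow_ne_zero 2 hd2)) hd3))]
  ring

set_option maxHeartbeats 4000000 in
/-- The scalar cocycle computation: with `x = rfX` and `q^{1/2} = s = rfS` (so `q = s²`),
`(1/16) Σ_{ε₁,ε₂,ε₃ = ±1} ε₂ε₃ q² x⁻⁴ (ε₁ε₂ε₃ q^{-1/2} - (1 - ε₂ε₃ q^{-1} x)/(1 - ε₂ε₃ x))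
(ε₃ q^{-1/2} - (1 - ε₁ q^{-1/2} x)/(1 - ε₁ q^{1/2} x))
(ε₂ q^{-1/2} - (1 - ε₁ q^{-1/2} x)/(1 - ε₁ q^{1/2} x))
(ε₁ q^{-1/2} - (1 - x)/(1 - q x))
= (1 - x⁻²)(1 - q x⁻²)/((1 - x²)(1 - q x²))` as rational functions. -/
theorem stmt_14 :
    (1 / 16 : RF) *
      ∑ e₁ ∈ ({1, -1} : Finset RF), ∑ e₂ ∈ ({1, -1} : Finset RF),
        ∑ e₃ ∈ ({1, -1} : Finset RF),
          e₂ * e₃ * rfS ^ 4 * (rfX⁻¹) ^ 4 *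
            (e₁ * e₂ * e₃ * rfS⁻¹ -
              (1 - e₂ * e₃ * (rfS ^ 2)⁻¹ * rfX) / (1 - e₂ * e₃ * rfX)) *
            (e₃ * rfS⁻¹ - (1 - e₁ * rfS⁻¹ * rfX) / (1 - e₁ * rfS * rfX)) *
            (e₂ * rfS⁻¹ - (1 - e₁ * rfS⁻¹ * rfX) / (1 - e₁ * rfS * rfX)) *
            (e₁ * rfS⁻¹ - (1 - rfX) / (1 - rfS ^ 2 * rfX))
      = (1 - (rfX⁻¹) ^ 2) * (1 - rfS ^ 2 * (rfX⁻¹) ^ 2) /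
          ((1 - rfX ^ 2) * (1 - rfS ^ 2 * rfX ^ 2)) := by
  have key : ∀ p : MvPolynomial (Fin 2) ℚ,
      MvPolynomial.eval (fun i => if i = 0 then (1/2:ℚ) else 1/3) p ≠ 0 →
      algebraMap (MvPolynomial (Fin 2) ℚ) RF p ≠ 0 := amap_ne_zero'
  have hx : rfX ≠ 0 := by apply key; norm_num
  have hs : rfS ≠ 0 := by apply key; norm_num
  have h1 : (1 : RF) - rfX ≠ 0 := by
    rw [show (1 : RF) - rfX
        = algebraMap (MvPolynomial (Fin 2) ℚ) RF (1 - MvPolynomial.X 0) by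
      simp [rfX, map_sub]]
    apply key; norm_num
  have h2 : (1 : RF) + rfX ≠ 0 := by
    rw [show (1 : RF) + rfX
        = algebraMap (MvPolynomial (Fin 2) ℚ) RF (1 + MvPolynomial.X 0) by
      simp [rfX, map_add]]
    apply key; norm_num
  have h3 : (1 : RF) - rfS * rfX ≠ 0 := by
    rw [show (1 : RF) - rfS * rfX
        = algebraMap (MvPolynomial (Fin 2) ℚ) RF (1 - MvPolynomial.X 1 * MvPolynomial.X 0) by
      simp [rfX, rfS, map_sub, map_mul]]
    apply key; norm_num
  have h4 : (1 : RF) + rfS * rfX ≠ 0 := by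
    rw [show (1 : RF) + rfS * rfX
        = algebraMap (MvPolynomial (Fin 2) ℚ) RF (1 + MvPolynomial.X 1 * MvPolynomial.X 0) by
      simp [rfX, rfS, map_add, map_mul]]
    apply key; norm_num
  have h5 : (1 : RF) - rfS ^ 2 * rfX ≠ 0 := by
    rw [show (1 : RF) - rfS ^ 2 * rfX
        = algebraMap (MvPolynomial (Fin 2) ℚ) RF
            (1 - MvPolynomial.X 1 ^ 2 * MvPolynomial.X 0) by
      simp [rfX, rfS, map_sub, map_mul, map_pow]]
    apply key; norm_num
  have h6 : (1 : RF) - rfX ^ 2 ≠ 0 := by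
    rw [show (1 : RF) - rfX ^ 2
        = algebraMap (MvPolynomial (Fin 2) ℚ) RF (1 - MvPolynomial.X 0 ^ 2) by
      simp [rfX, map_sub, map_pow]]
    apply key; norm_num
  have h7 : (1 : RF) - rfS ^ 2 * rfX ^ 2 ≠ 0 := by
    rw [show (1 : RF) - rfS ^ 2 * rfX ^ 2
        = algebraMap (MvPolynomial (Fin 2) ℚ) RF
            (1 - MvPolynomial.X 1 ^ 2 * MvPolynomial.X 0 ^ 2) by
      simp [rfX, rfS, map_sub, map_mul, map_pow]]
    apply key; norm_num
  have hne : (1 : RF) ≠ -1 := by norm_num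
  have d11 : (1 : RF) - 1 * 1 * rfX ≠ 0 := fun h => h1 (by linear_combination h)
  have d1m : (1 : RF) - 1 * (-1) * rfX ≠ 0 := fun h => h2 (by linear_combination h)
  have dm1 : (1 : RF) - (-1) * 1 * rfX ≠ 0 := fun h => h2 (by linear_combination h)
  have dmm : (1 : RF) - (-1) * (-1) * rfX ≠ 0 := fun h => h1 (by linear_combination h)
  have d2p : (1 : RF) - 1 * rfS * rfX ≠ 0 := fun h => h3 (by linear_combination h)
  have d2m : (1 : RF) - (-1) * rfS * rfX ≠ 0 := fun h => h4 (by linear_combination h)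
  simp only [Finset.sum_pair hne]
  rw [term_eq rfX rfS 1 1 1 hx hs d11 d2p h5,
    term_eq rfX rfS 1 1 (-1) hx hs d1m d2p h5,
    term_eq rfX rfS 1 (-1) 1 hx hs dm1 d2p h5,
    term_eq rfX rfS 1 (-1) (-1) hx hs dmm d2p h5,
    term_eq rfX rfS (-1) 1 1 hx hs d11 d2m h5,
    term_eq rfX rfS (-1) 1 (-1) hx hs d1m d2m h5,
    term_eq rfX rfS (-1) (-1) 1 hx hs dm1 d2m h5,
    term_eq rfX rfS (-1) (-1) (-1) hx hs dmm d2m h5]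
  simp only [one_mul, mul_one, neg_mul, mul_neg, neg_neg, sub_neg_eq_add, ← neg_div]
  have hx2 : rfX ^ 2 ≠ 0 := pow_ne_zero 2 hx
  have e : rfX⁻¹ ^ 2 * rfX ^ 2 = 1 := by
    rw [← mul_pow, inv_mul_cancel₀ hx, one_pow]
  have hDpp : rfS * rfX ^ 4 * ((1 - rfX) * (1 - rfS * rfX) ^ 2 * (1 - rfS ^ 2 * rfX)) ≠ 0 :=
    mul_ne_zero (mul_ne_zero hs (pow_ne_zero 4 hx))
      (mul_ne_zero (mul_ne_zero h1 (pow_ne_zero 2 h3)) h5)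
  have hDmp : rfS * rfX ^ 4 * ((1 + rfX) * (1 - rfS * rfX) ^ 2 * (1 - rfS ^ 2 * rfX)) ≠ 0 :=
    mul_ne_zero (mul_ne_zero hs (pow_ne_zero 4 hx))
      (mul_ne_zero (mul_ne_zero h2 (pow_ne_zero 2 h3)) h5)
  have hDpP : rfS * rfX ^ 4 * ((1 - rfX) * (1 + rfS * rfX) ^ 2 * (1 - rfS ^ 2 * rfX)) ≠ 0 :=
    mul_ne_zero (mul_ne_zero hs (pow_ne_zero 4 hx))
      (mul_ne_zero (mul_ne_zero h1 (pow_ne_zero 2 h4)) h5)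
  have hDmP : rfS * rfX ^ 4 * ((1 + rfX) * (1 + rfS * rfX) ^ 2 * (1 - rfS ^ 2 * rfX)) ≠ 0 :=
    mul_ne_zero (mul_ne_zero hs (pow_ne_zero 4 hx))
      (mul_ne_zero (mul_ne_zero h2 (pow_ne_zero 2 h4)) h5)
  rw [show (1 - rfX⁻¹ ^ 2) * (1 - rfS ^ 2 * rfX⁻¹ ^ 2)
      = ((rfX ^ 2 - 1) * (rfX ^ 2 - rfS ^ 2)) / rfX ^ 4 by
    rw [eq_div_iff (pow_ne_zero 4 hx)]
    linear_combination (-rfX ^ 2 - rfS ^ 2 * rfX ^ 2 + rfS ^ 2 * (rfX⁻¹ ^ 2 * rfX ^ 2)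
      + rfS ^ 2) * e, div_div]
  rw [div_add_div _ _ hDpp hDmp,
    div_add_div _ _ hDmp hDpp,
    div_add_div _ _ (mul_ne_zero hDpp hDmp) (mul_ne_zero hDmp hDpp),
    div_add_div _ _ hDpP hDmP,
    div_add_div _ _ hDmP hDpP,
    div_add_div _ _ (mul_ne_zero hDpP hDmP) (mul_ne_zero hDmP hDpP),
    div_add_div _ _ (mul_ne_zero (mul_ne_zero hDpp hDmp) (mul_ne_zero hDmp hDpp))
      (mul_ne_zero (mul_ne_zero hDpP hDmP) (mul_ne_zero hDmP hDpP)),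
    ← mul_div_assoc,
    div_eq_div_iff (mul_ne_zero (mul_ne_zero (mul_ne_zero hDpp hDmp) (mul_ne_zero hDmp hDpp))
      (mul_ne_zero (mul_ne_zero hDpP hDmP) (mul_ne_zero hDmP hDpP)))
      (mul_ne_zero (pow_ne_zero 4 hx) (mul_ne_zero h6 h7))]
  ring
end

section
/- Let n ≥ 3 be odd. The formal power series R(x_0, x_2, ..., x_{n-1}) = Π_{m=0}^∞ (1-(x_0 x_2⋯x_{n-1})^(2m+1))^(-1) (1-q(x_0 x_2⋯x_{n-1})^(2m+1))^(-1) Π_{i,j even mod n+1} (1-(x_0 x_2⋯x_{n-1})^(2m)(x_i x_{i+2}⋯x_j)²)^(-1)(1-q(x_0 x_2⋯x_{n-1})^(2m)(x_i x_{i+2}⋯x_j)²)^(-1) satisfies, for each even i, the functional equation R(..., x_{i-2}, x_i, x_{i+2}, ...) = [(1-x_i^(-2))(1-q x_i^(-2)) / ((1-x_i²)(1-q x_i²))] · R(..., x_{i-2} x_i, 1/x_i, x_i x_{i+2}, ...). -/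
/-- The cyclic product `y_s y_{s+1} ⋯ y_t` over the cyclic interval from `s` to `t`
mod `k+2`. Here `y_t` stands for the variable `x_{2t}` of the paper, `n = 2k+3`. -/
noncomputable def segProd (k : ℕ) (y : ZMod (k + 2) → ℂ) (s t : ZMod (k + 2)) : ℂ :=
  ∏ r ∈ Finset.range ((t - s).val + 1), y (s + (r : ℕ))

/-- The reciprocal of the diagonal factors of `R`, indexed by `m`:
`(1 - (x_0 x_2⋯x_{n-1})^{2m+1})(1 - q (x_0 x_2⋯x_{n-1})^{2m+1})`. -/
noncomputable def diagFac (k : ℕ) (q : ℂ) (y : ZMod (k + 2) → ℂ) (m : ℕ) : ℂ :=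
  (1 - (∏ t, y t) ^ (2 * m + 1)) * (1 - q * (∏ t, y t) ^ (2 * m + 1))

/-- The reciprocal of the off-diagonal factors of `R`, indexed by `(m, i, j)` (even `i, j`
of the paper): `(1 - (x_0⋯x_{n-1})^{2m}(x_i x_{i+2}⋯x_j)²)(1 - q (…)(…)²)`. -/
noncomputable def offFac (k : ℕ) (q : ℂ) (y : ZMod (k + 2) → ℂ)
    (p : ℕ × ZMod (k + 2) × ZMod (k + 2)) : ℂ :=
  (1 - (∏ t, y t) ^ (2 * p.1) * (segProd k y p.2.1 p.2.2) ^ 2) *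
    (1 - q * (∏ t, y t) ^ (2 * p.1) * (segProd k y p.2.1 p.2.2) ^ 2)

/-- The substitution `(…, x_{i-2}, x_i, x_{i+2}, …) ↦ (…, x_{i-2} x_i, 1/x_i, x_i x_{i+2}, …)`
on the even-indexed variables, at position `t`. -/
noncomputable def subst18 (k : ℕ) (t : ZMod (k + 2)) (y : ZMod (k + 2) → ℂ) :
    ZMod (k + 2) → ℂ := fun r =>
  if r = t then (y t)⁻¹
  else y r * (if r = t + 1 then y t else 1) * (if r = t - 1 then y t else 1)

namespace Aux18

variable {k : ℕ}

lemma one_ne_zero' : (1 : ZMod (k + 2)) ≠ 0 := by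
  intro h
  have h1 : ((1 : ℕ) : ZMod (k + 2)).val = 1 := ZMod.val_cast_of_lt (by omega)
  rw [Nat.cast_one, h, ZMod.val_zero] at h1
  exact one_ne_zero h1.symm

lemma eq_of_val_eq {a b : ZMod (k + 2)} (h : a.val = b.val) : a = b := by
  have := ZMod.natCast_zmod_val a
  rw [h, ZMod.natCast_zmod_val] at this
  exact this.symm

lemma val_sub_one {a : ZMod (k + 2)} (ha : a ≠ 0) : (a - 1).val + 1 = a.val := by
  have hpos : 0 < a.val := ZMod.val_pos.mpr ha
  have h1 : a - 1 = ((a.val - 1 : ℕ) : ZMod (k + 2)) := by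
    have : a = ((a.val : ℕ) : ZMod (k + 2)) := (ZMod.natCast_zmod_val a).symm
    rw [Nat.cast_sub hpos, ← this, Nat.cast_one]
  rw [h1, ZMod.val_cast_of_lt (by have := ZMod.val_lt a; omega)]
  omega

lemma val_add_one {a : ZMod (k + 2)} (ha : a ≠ -1) : (a + 1).val = a.val + 1 := by
  have h0 : a + 1 ≠ 0 := by
    intro h; apply ha; linear_combination h
  have := val_sub_one h0
  rw [add_sub_cancel_right] at this
  omega

/-- singleton segment -/
lemma segProd_self (y : ZMod (k + 2) → ℂ) (s : ZMod (k + 2)) : segProd k y s s = y s := by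
  simp [segProd]

/-- peel the last factor -/
lemma segProd_back (y : ZMod (k + 2) → ℂ) {s e : ZMod (k + 2)} (h : s ≠ e) :
    segProd k y s e = segProd k y s (e - 1) * y e := by
  have h0 : e - s ≠ 0 := sub_ne_zero.mpr (Ne.symm h)
  have hv : (e - 1 - s).val + 1 = (e - s).val := by
    rw [show e - 1 - s = (e - s) - 1 by ring]; exact val_sub_one h0
  unfold segProd
  rw [← hv, Finset.prod_range_succ]
  congr 1
  push_cast [ZMod.natCast_zmod_val]
  ring_nf

/-- peel the first factor -/
lemma segProd_front (y : ZMod (k + 2) → ℂ) {s e : ZMod (k + 2)} (h : s ≠ e) :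
    segProd k y s e = y s * segProd k y (s + 1) e := by
  have h0 : e - s ≠ 0 := sub_ne_zero.mpr (Ne.symm h)
  have hv : (e - (s + 1)).val + 1 = (e - s).val := by
    rw [show e - (s + 1) = (e - s) - 1 by ring]; exact val_sub_one h0
  unfold segProd
  rw [← hv, Finset.prod_range_succ', mul_comm]
  congr 1
  · norm_num
  · apply Finset.prod_congr rfl
    intro i _
    congr 1
    push_cast
    ring

/-- full cycle -/
lemma segProd_full (y : ZMod (k + 2) → ℂ) (s : ZMod (k + 2)) :
    segProd k y s (s - 1) = ∏ z, y z := by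
  have hv : (s - 1 - s).val = k + 1 := by
    rw [show s - 1 - s = -1 by ring]; exact ZMod.val_neg_one (k + 1)
  unfold segProd
  rw [hv]
  refine Finset.prod_bij' (fun r _ => s + (r : ℕ)) (fun z _ => (z - s).val) ?_ ?_ ?_ ?_ ?_
  · intro a ha; exact Finset.mem_univ _
  · intro z _
    have := ZMod.val_lt (z - s)
    simp only [Finset.mem_range]
    omega
  · intro r hr
    simp only [Finset.mem_range] at hr
    show ((s + (r : ℕ)) - s).val = r
    rw [add_sub_cancel_left, ZMod.val_cast_of_lt (by omega)]
  · intro z _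
    show s + (((z - s).val : ℕ) : ZMod (k + 2)) = z
    rw [ZMod.natCast_zmod_val]
    ring
  · intro r _; rfl

lemma subst18_apply (y : ZMod (k + 2) → ℂ) (t : ZMod (k + 2)) (hyt : y t ≠ 0)
    (r : ZMod (k + 2)) :
    subst18 k t y r = y r * (if r = t + 1 then y t else 1) * (if r = t - 1 then y t else 1)
      * (if r = t then ((y t)⁻¹) ^ 2 else 1) := by
  have h1 : t + 1 ≠ t := by
    intro h; exact one_ne_zero' (k := k) (by linear_combination h)
  have h2 : t - 1 ≠ t := by
    intro h; exact one_ne_zero' (k := k) (by linear_combination -h)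
  unfold subst18
  by_cases hr : r = t
  · subst hr
    rw [if_pos rfl, if_pos rfl, if_neg h1.symm, if_neg h2.symm]
    field_simp
  · rw [if_neg hr, if_neg hr]
    ring

lemma prod_ite_seg (s e x : ZMod (k + 2)) (a : ℂ) :
    (∏ r ∈ Finset.range ((e - s).val + 1), if (s + (r : ℕ) : ZMod (k + 2)) = x then a else 1)
      = if (x - s).val ≤ (e - s).val then a else 1 := by
  have hcongr : ∀ r ∈ Finset.range ((e - s).val + 1),
      (if (s + (r : ℕ) : ZMod (k + 2)) = x then a else 1)
        = (if r = (x - s).val then a else 1) := by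
    intro r hr
    simp only [Finset.mem_range] at hr
    have hlt : r < k + 2 := by have := ZMod.val_lt (e - s); omega
    have hiff : ((s + (r : ℕ) : ZMod (k + 2)) = x) ↔ r = (x - s).val := by
      constructor
      · intro h
        have h2 : ((r : ℕ) : ZMod (k + 2)) = x - s := by rw [← h]; ring
        have := congrArg ZMod.val h2
        rwa [ZMod.val_cast_of_lt hlt] at this
      · intro h
        subst h
        rw [ZMod.natCast_zmod_val]
        ring
    simp only [hiff]
  rw [Finset.prod_congr rfl hcongr, Finset.prod_ite_eq' (Finset.range ((e - s).val + 1))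
    ((x - s).val) (fun _ => a)]
  simp [Nat.lt_succ_iff]

lemma segProd_subst (y : ZMod (k + 2) → ℂ) (t : ZMod (k + 2)) (hyt : y t ≠ 0)
    (s e : ZMod (k + 2)) :
    segProd k (subst18 k t y) s e
      = segProd k y s e
        * (if (t + 1 - s).val ≤ (e - s).val then y t else 1)
        * (if (t - 1 - s).val ≤ (e - s).val then y t else 1)
        * (if (t - s).val ≤ (e - s).val then ((y t)⁻¹) ^ 2 else 1) := by
  unfold segProd
  rw [Finset.prod_congr rfl (fun r _ => subst18_apply y t hyt (s + (r : ℕ)))]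
  rw [Finset.prod_mul_distrib, Finset.prod_mul_distrib, Finset.prod_mul_distrib]
  rw [prod_ite_seg, prod_ite_seg, prod_ite_seg]

lemma pi_subst (y : ZMod (k + 2) → ℂ) (t : ZMod (k + 2)) (hyt : y t ≠ 0) :
    ∏ r, subst18 k t y r = ∏ r, y r := by
  rw [Finset.prod_congr rfl (fun r _ => subst18_apply y t hyt r)]
  rw [Finset.prod_mul_distrib, Finset.prod_mul_distrib, Finset.prod_mul_distrib]
  rw [Finset.prod_ite_eq' Finset.univ (t + 1) (fun _ => y t),
    Finset.prod_ite_eq' Finset.univ (t - 1) (fun _ => y t),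
    Finset.prod_ite_eq' Finset.univ t (fun _ => ((y t)⁻¹) ^ 2)]
  simp only [Finset.mem_univ, if_true]
  field_simp

def sig (k : ℕ) (t : ZMod (k + 2)) (p : ℕ × ZMod (k + 2) × ZMod (k + 2)) :
    ℕ × ZMod (k + 2) × ZMod (k + 2) :=
  if p.2.1 = t ∧ p.2.2 = t then (if p.1 = 0 then p else (p.1 - 1, t + 1, t - 1))
  else if p.2.1 = t + 1 ∧ p.2.2 = t - 1 then (p.1 + 1, t, t)
  else if p.2.1 = t ∧ p.2.2 ≠ t - 1 then (p.1, t + 1, p.2.2)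
  else if p.2.1 = t + 1 ∧ p.2.2 ≠ t ∧ p.2.2 ≠ t - 1 then (p.1, t, p.2.2)
  else if p.2.2 = t ∧ p.2.1 ≠ t ∧ p.2.1 ≠ t + 1 then (p.1, p.2.1, t - 1)
  else if p.2.2 = t - 1 ∧ p.2.1 ≠ t ∧ p.2.1 ≠ t + 1 then (p.1, p.2.1, t)
  else p

lemma sig_invol (t : ZMod (k + 2)) : Function.Involutive (sig k t) := by
  have h1 : t + 1 ≠ t := by
    intro h; exact one_ne_zero' (k := k) (by linear_combination h)
  have h2 : t - 1 ≠ t := by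
    intro h; exact one_ne_zero' (k := k) (by linear_combination -h)
  rintro ⟨m, s, e⟩
  by_cases c1 : s = t ∧ e = t
  · obtain ⟨hs, he⟩ := c1
    by_cases hm : m = 0
    · simp [sig, hs, he, hm]
    · have e1 : sig k t (m, s, e) = (m - 1, t + 1, t - 1) := by simp [sig, hs, he, hm]
      have e2 : sig k t (m - 1, t + 1, t - 1) = (m - 1 + 1, t, t) := by simp [sig, h1]
      have h3 : m - 1 + 1 = m := by omega
      rw [e1, e2, h3, hs, he]
  by_cases c2 : s = t + 1 ∧ e = t - 1
  · obtain ⟨hs, he⟩ := c2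
    have e1 : sig k t (m, s, e) = (m + 1, t, t) := by simp [sig, hs, he, h1]
    have e2 : sig k t (m + 1, t, t) = (m, t + 1, t - 1) := by simp [sig]
    rw [e1, e2, hs, he]
  by_cases c3 : s = t ∧ e ≠ t - 1
  · obtain ⟨hs, he⟩ := c3
    have hne : e ≠ t := fun h => c1 ⟨hs, h⟩
    have e1 : sig k t (m, s, e) = (m, t + 1, e) := by simp [sig, hs, hne, he]
    have e2 : sig k t (m, t + 1, e) = (m, t, e) := by simp [sig, h1, hne, he]
    rw [e1, e2, hs]
  by_cases c4 : s = t + 1 ∧ e ≠ t ∧ e ≠ t - 1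
  · obtain ⟨hs, he1, he2⟩ := c4
    have e1 : sig k t (m, s, e) = (m, t, e) := by simp [sig, hs, h1, he1, he2]
    have e2 : sig k t (m, t, e) = (m, t + 1, e) := by simp [sig, he1, he2]
    rw [e1, e2, hs]
  by_cases c5 : e = t ∧ s ≠ t ∧ s ≠ t + 1
  · obtain ⟨he, hs1, hs2⟩ := c5
    have e1 : sig k t (m, s, e) = (m, s, t - 1) := by simp [sig, he, hs1, hs2]
    have e2 : sig k t (m, s, t - 1) = (m, s, t) := by simp [sig, hs1, hs2, h2]
    rw [e1, e2, he]
  by_cases c6 : e = t - 1 ∧ s ≠ t ∧ s ≠ t + 1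
  · obtain ⟨he, hs1, hs2⟩ := c6
    have e1 : sig k t (m, s, e) = (m, s, t) := by simp [sig, he, hs1, hs2, h2]
    have e2 : sig k t (m, s, t) = (m, s, t - 1) := by simp [sig, hs1, hs2]
    rw [e1, e2, he]
  have hfix : sig k t (m, s, e) = (m, s, e) := by
    simp only [sig]
    split_ifs <;> tauto
  rw [hfix, hfix]


lemma eq_neg_one_of_val {a : ZMod (k + 2)} (h : k + 1 ≤ a.val) : a = -1 := by
  have hlt := ZMod.val_lt a
  have hv : a.val = k + 1 := by omega
  exact eq_of_val_eq (by rw [hv, ZMod.val_neg_one])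

lemma val_neg_two : (-2 : ZMod (k + 2)).val = k := by
  have h : (-2 : ZMod (k + 2)) = ((k : ℕ) : ZMod (k + 2)) := by
    have h2 := ZMod.natCast_self (k + 2)
    push_cast at h2 ⊢
    linear_combination -h2
  rw [h, ZMod.val_cast_of_lt (by omega)]

lemma eq_neg_two_or_neg_one_of_val {a : ZMod (k + 2)} (h : k ≤ a.val) : a = -2 ∨ a = -1 := by
  have hlt := ZMod.val_lt a
  rcases Nat.lt_or_ge a.val (k + 1) with h' | h'
  · left
    have hv : a.val = k := by omega
    exact eq_of_val_eq (by rw [hv, val_neg_two])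
  · right; exact eq_neg_one_of_val h'

lemma val_ne_of_ne {a b s : ZMod (k + 2)} (h : a ≠ b) : (a - s).val ≠ (b - s).val := by
  intro hc
  exact h (by have := eq_of_val_eq hc; linear_combination this)

set_option maxHeartbeats 1000000 in
lemma key (q : ℂ) (y : ZMod (k + 2) → ℂ) (t : ZMod (k + 2)) (hy : ∀ r, y r ≠ 0)
    (p : ℕ × ZMod (k + 2) × ZMod (k + 2)) (hp : p ≠ (0, t, t)) :
    offFac k q (subst18 k t y) p = offFac k q y (sig k t p) := by
  haveI : Fact (1 < k + 2) := ⟨by omega⟩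
  have h1 : t + 1 ≠ t := by
    intro h; exact one_ne_zero' (k := k) (by linear_combination h)
  have h2 : t - 1 ≠ t := by
    intro h; exact one_ne_zero' (k := k) (by linear_combination -h)
  have hyt : y t ≠ 0 := hy t
  have hP : ∏ r, subst18 k t y r = ∏ r, y r := pi_subst y t hyt
  have hS : segProd k y (t + 1) (t - 1) * y t = ∏ z, y z := by
    have hb := segProd_back y (show (t + 1 : ZMod (k + 2)) ≠ t from h1)
    have hf := segProd_full y (t + 1)
    rw [add_sub_cancel_right] at hf
    rw [← hb]
    exact hf
  have v1 : (1 : ZMod (k + 2)).val = 1 := ZMod.val_one _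
  have vneg1 : (-1 : ZMod (k + 2)).val = k + 1 := ZMod.val_neg_one (k + 1)
  obtain ⟨m, s, e⟩ := p
  by_cases c1 : s = t ∧ e = t
  · obtain ⟨hs, he⟩ := c1
    have hm : m ≠ 0 := by rintro rfl; exact hp (by rw [hs, he])
    obtain ⟨m', rfl⟩ : ∃ m', m = m' + 1 := ⟨m - 1, by omega⟩
    have hsig : sig k t (m' + 1, s, e) = (m', t + 1, t - 1) := by simp [sig, hs, he]
    have hseg : segProd k (subst18 k t y) s e = y t * ((y t)⁻¹) ^ 2 := by
      rw [hs, he]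
      have hw := segProd_subst y t hyt t t
      rw [show t + 1 - t = 1 by ring, show t - 1 - t = -1 by ring, sub_self,
        v1, vneg1, ZMod.val_zero] at hw
      rw [if_neg (by omega), if_neg (by omega), if_pos (le_refl 0)] at hw
      rw [hw, segProd_self]
      ring
    rw [hsig]
    simp only [offFac, hP, hseg]
    rw [← hS]
    field_simp
    ring
  by_cases c2 : s = t + 1 ∧ e = t - 1
  · obtain ⟨hs, he⟩ := c2
    have hsig : sig k t (m, s, e) = (m + 1, t, t) := by simp [sig, hs, he, h1]
    have hseg : segProd k (subst18 k t y) s e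
        = segProd k y (t + 1) (t - 1) * y t * y t := by
      rw [hs, he]
      have hw := segProd_subst y t hyt (t + 1) (t - 1)
      rw [show t + 1 - (t + 1) = 0 by ring, show t - 1 - (t + 1) = -2 by ring,
        show t - (t + 1) = -1 by ring, ZMod.val_zero, val_neg_two, vneg1] at hw
      rw [if_pos (by omega), if_pos (le_refl _), if_neg (by omega)] at hw
      rw [hw]
      ring
    rw [hsig]
    simp only [offFac, hP, hseg, segProd_self]
    rw [← hS]
    ring
  by_cases c3 : s = t ∧ e ≠ t - 1
  · obtain ⟨hs, he⟩ := c3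
    have hne : e ≠ t := fun h => c1 ⟨hs, h⟩
    have hsig : sig k t (m, s, e) = (m, t + 1, e) := by simp [sig, hs, hne, he]
    have hfront : segProd k y t e = y t * segProd k y (t + 1) e :=
      segProd_front y (Ne.symm hne)
    have hseg : segProd k (subst18 k t y) s e
        = segProd k y (t + 1) e * y t * y t * ((y t)⁻¹) ^ 2 := by
      rw [hs]
      have hw := segProd_subst y t hyt t e
      rw [show t + 1 - t = 1 by ring, show t - 1 - t = -1 by ring, sub_self,
        v1, vneg1, ZMod.val_zero] at hw
      have hpos : 1 ≤ (e - t).val := Nat.one_le_iff_ne_zero.mpr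
        (fun h => (sub_ne_zero.mpr hne) ((ZMod.val_eq_zero _).mp h))
      have hne1 : ¬(k + 1 ≤ (e - t).val) := by
        intro h
        exact he (by have := eq_neg_one_of_val h; linear_combination this)
      rw [if_pos hpos, if_neg hne1, if_pos (Nat.zero_le _)] at hw
      rw [hw, hfront]
      ring
    rw [hsig]
    simp only [offFac, hP, hseg]
    field_simp
  by_cases c4 : s = t + 1 ∧ e ≠ t ∧ e ≠ t - 1
  · obtain ⟨hs, he1, he2⟩ := c4
    have hsig : sig k t (m, s, e) = (m, t, e) := by simp [sig, hs, h1, he1, he2]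
    have hfront : segProd k y t e = y t * segProd k y (t + 1) e :=
      segProd_front y (Ne.symm he1)
    have hseg : segProd k (subst18 k t y) s e = segProd k y (t + 1) e * y t := by
      rw [hs]
      have hw := segProd_subst y t hyt (t + 1) e
      rw [show t + 1 - (t + 1) = 0 by ring, show t - 1 - (t + 1) = -2 by ring,
        show t - (t + 1) = -1 by ring, ZMod.val_zero, val_neg_two, vneg1] at hw
      have hc2 : ¬(k ≤ (e - (t + 1)).val) := by
        intro h
        rcases eq_neg_two_or_neg_one_of_val h with h' | h'
        · exact he2 (by linear_combination h')
        · exact he1 (by linear_combination h')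
      have hc3 : ¬(k + 1 ≤ (e - (t + 1)).val) := by omega
      rw [if_pos (Nat.zero_le _), if_neg hc2, if_neg hc3] at hw
      simpa using hw
    rw [hsig]
    simp only [offFac, hP, hseg]
    rw [hfront]
    ring
  by_cases c5 : e = t ∧ s ≠ t ∧ s ≠ t + 1
  · obtain ⟨he, hs1, hs2⟩ := c5
    have hts : t - s ≠ 0 := sub_ne_zero.mpr (Ne.symm hs1)
    have hts1 : t + 1 - s ≠ 0 := by
      intro h; exact hs2 (by linear_combination -h)
    have hv1 : (t - 1 - s).val + 1 = (t - s).val := by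
      rw [show t - 1 - s = (t - s) - 1 by ring]; exact val_sub_one hts
    have hv2 : (t - s).val + 1 = (t + 1 - s).val := by
      have := val_sub_one hts1
      rw [show t + 1 - s - 1 = t - s by ring] at this
      omega
    have hback : segProd k y s t = segProd k y s (t - 1) * y t :=
      segProd_back y hs1
    have hseg : segProd k (subst18 k t y) s e
        = segProd k y s (t - 1) * y t * y t * ((y t)⁻¹) ^ 2 := by
      rw [he]
      have hw := segProd_subst y t hyt s t
      rw [if_neg (by omega), if_pos (by omega), if_pos (le_refl _)] at hw
      rw [hw, hback]
      ring
    have hsig : sig k t (m, s, e) = (m, s, t - 1) := by simp [sig, he, hs1, hs2]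
    rw [hsig]
    simp only [offFac, hP, hseg]
    field_simp
  by_cases c6 : e = t - 1 ∧ s ≠ t ∧ s ≠ t + 1
  · obtain ⟨he, hs1, hs2⟩ := c6
    have hts : t - s ≠ 0 := sub_ne_zero.mpr (Ne.symm hs1)
    have hts1 : t + 1 - s ≠ 0 := by
      intro h; exact hs2 (by linear_combination -h)
    have hv1 : (t - 1 - s).val + 1 = (t - s).val := by
      rw [show t - 1 - s = (t - s) - 1 by ring]; exact val_sub_one hts
    have hv2 : (t - s).val + 1 = (t + 1 - s).val := by
      have := val_sub_one hts1
      rw [show t + 1 - s - 1 = t - s by ring] at this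
      omega
    have hsig : sig k t (m, s, e) = (m, s, t) := by simp [sig, he, hs1, hs2, h2]
    have hback : segProd k y s t = segProd k y s (t - 1) * y t :=
      segProd_back y hs1
    have hseg : segProd k (subst18 k t y) s e = segProd k y s (t - 1) * y t := by
      rw [he]
      have hw := segProd_subst y t hyt s (t - 1)
      rw [if_neg (by omega), if_pos (le_refl _), if_neg (by omega)] at hw
      rw [hw]
      ring
    rw [hsig]
    simp only [offFac, hP, hseg]
    rw [hback]
  have hfix : sig k t (m, s, e) = (m, s, e) := by
    simp only [sig]
    rw [if_neg c1, if_neg c2, if_neg c3, if_neg c4, if_neg c5, if_neg c6]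
  have hseg : segProd k (subst18 k t y) s e = segProd k y s e := by
    by_cases hs : s = t
    · have he : e = t - 1 := by
        by_contra hne
        exact c3 ⟨hs, hne⟩
      rw [hs, he]
      have hw := segProd_subst y t hyt t (t - 1)
      rw [show t - 1 - t = -1 by ring, vneg1] at hw
      have hb1 : (t + 1 - t).val ≤ k + 1 := by have := ZMod.val_lt (t + 1 - t); omega
      have hb2 : (t - t).val ≤ k + 1 := by have := ZMod.val_lt (t - t); omega
      rw [if_pos hb1, if_pos (le_refl _), if_pos hb2] at hw
      rw [hw]
      field_simp
    by_cases hs' : s = t + 1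
    · have he : e = t := by
        have he2 : e ≠ t - 1 := fun h => c2 ⟨hs', h⟩
        by_contra hne
        exact c4 ⟨hs', hne, he2⟩
      rw [hs', he]
      have hw := segProd_subst y t hyt (t + 1) t
      rw [show t - (t + 1) = -1 by ring, vneg1] at hw
      have hb1 : (t + 1 - (t + 1)).val ≤ k + 1 := by
        have := ZMod.val_lt (t + 1 - (t + 1)); omega
      have hb2 : (t - 1 - (t + 1)).val ≤ k + 1 := by
        have := ZMod.val_lt (t - 1 - (t + 1)); omega
      rw [if_pos hb1, if_pos hb2, if_pos (le_refl _)] at hw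
      rw [hw]
      field_simp
    · have he1 : e ≠ t := fun h => c5 ⟨h, hs, hs'⟩
      have he2 : e ≠ t - 1 := fun h => c6 ⟨h, hs, hs'⟩
      have hts : t - s ≠ 0 := sub_ne_zero.mpr (Ne.symm hs)
      have hts1 : t + 1 - s ≠ 0 := by
        intro h; exact hs' (by linear_combination -h)
      have hv1 : (t - 1 - s).val + 1 = (t - s).val := by
        rw [show t - 1 - s = (t - s) - 1 by ring]; exact val_sub_one hts
      have hv2 : (t - s).val + 1 = (t + 1 - s).val := by
        have := val_sub_one hts1
        rw [show t + 1 - s - 1 = t - s by ring] at this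
        omega
      have hw := segProd_subst y t hyt s e
      by_cases hmem : (t - s).val ≤ (e - s).val
      · have hne : (t - s).val ≠ (e - s).val := val_ne_of_ne (Ne.symm he1)
        rw [if_pos (by omega), if_pos (by omega), if_pos hmem] at hw
        rw [hw]
        field_simp
      · have hne2 : (t - 1 - s).val ≠ (e - s).val := val_ne_of_ne (Ne.symm he2)
        rw [if_neg (by omega), if_neg (by omega), if_neg hmem] at hw
        rw [hw]
        ring
  rw [hfix]
  simp only [offFac, hP, hseg]

end Aux18

/-- The residue `R = Π diagFac⁻¹ · Π offFac⁻¹` (for `n = 2k+3 ≥ 3` odd) satisfies the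
functional equation `R(…, x_{i-2}, x_i, x_{i+2}, …) =
[(1-x_i^{-2})(1-q x_i^{-2})/((1-x_i²)(1-q x_i²))] · R(…, x_{i-2}x_i, 1/x_i, x_i x_{i+2}, …)`,
stated with denominators cleared. -/
theorem stmt_18 (k : ℕ) (q : ℂ) (y : ZMod (k + 2) → ℂ) (hy : ∀ t, y t ≠ 0)
    (t : ZMod (k + 2))
    (h1 : Multipliable (diagFac k q y)) (h2 : Multipliable (offFac k q y))
    (h3 : Multipliable (diagFac k q (subst18 k t y)))
    (h4 : Multipliable (offFac k q (subst18 k t y))) :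
    (1 - (y t) ^ 2) * (1 - q * (y t) ^ 2) *
        ((∏' m : ℕ, diagFac k q (subst18 k t y) m) *
          (∏' p : ℕ × ZMod (k + 2) × ZMod (k + 2), offFac k q (subst18 k t y) p))
      = (1 - ((y t)⁻¹) ^ 2) * (1 - q * ((y t)⁻¹) ^ 2) *
          ((∏' m : ℕ, diagFac k q y m) *
            (∏' p : ℕ × ZMod (k + 2) × ZMod (k + 2), offFac k q y p)) := by
  have hyt : y t ≠ 0 := hy t
  have hP : ∏ r, subst18 k t y r = ∏ r, y r := Aux18.pi_subst y t hyt
  have hdiag : diagFac k q (subst18 k t y) = diagFac k q y := by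
    funext m
    unfold diagFac
    rw [hP]
  have hinv := Aux18.sig_invol (k := k) t
  set σ : Equiv.Perm (ℕ × ZMod (k + 2) × ZMod (k + 2)) := hinv.toPerm with hσdef
  have hσ : ∀ p, σ p = Aux18.sig k t p := fun _ => rfl
  have hfix0 : Aux18.sig k t (0, t, t) = (0, t, t) := by simp [Aux18.sig]
  have hupd : (fun p => offFac k q y (Aux18.sig k t p))
      = Function.update (offFac k q (subst18 k t y)) (0, t, t) (offFac k q y (0, t, t)) := by
    funext p
    rcases eq_or_ne p (0, t, t) with rfl | hp
    · rw [Function.update_self, hfix0]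
    · rw [Function.update_of_ne hp]
      exact (Aux18.key q y t hy p hp).symm
  have hOy : HasProd (fun p => offFac k q y (Aux18.sig k t p)) (∏' p, offFac k q y p) := by
    have hh : HasProd (offFac k q y ∘ σ) (∏' p, offFac k q y p) :=
      (σ.hasProd_iff).mpr h2.hasProd
    exact hh
  rw [hupd] at hOy
  have hmain := HasProd.update' h4.hasProd (0, t, t) (offFac k q y (0, t, t)) hOy
  have e1 : offFac k q y (0, t, t) = (1 - y t ^ 2) * (1 - q * y t ^ 2) := by
    unfold offFac
    rw [Aux18.segProd_self]
    norm_num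
  have e2 : offFac k q (subst18 k t y) (0, t, t)
      = (1 - ((y t)⁻¹) ^ 2) * (1 - q * ((y t)⁻¹) ^ 2) := by
    have hseg : segProd k (subst18 k t y) t t = (y t)⁻¹ := by
      rw [Aux18.segProd_self]
      unfold subst18
      rw [if_pos rfl]
    unfold offFac
    rw [hseg]
    norm_num
  rw [hdiag, ← e1, ← e2]
  linear_combination (∏' m : ℕ, diagFac k q y m) * hmain
end

section
/- Let n ≥ 1 and consider (n)-tuples of partitions (δ_1, ..., δ_n), each δ_i = (δ_i^(1) ≥ δ_i^(2) ≥ ... ≥ 0) with finite support. The generating function weighted by Π_k x_k^(a_k) where a_k = Σ_{i+j ≡ k mod n} δ_i^(j) equals Π_{m=0}^∞ Π_{i,j mod n} (1 - (x_i x_{i+1} ⋯ x_j)(x_1 x_2 ⋯ x_n)^m)^(-1), as formal power series in x_1,...,x_n. -/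
open Finset MvPowerSeries

open scoped Classical in
noncomputable def geomS {σ : Type*} (e : σ →₀ ℕ) : MvPowerSeries σ ℚ :=
  fun b => if ∃ k : ℕ, b = k • e then 1 else 0

open scoped Classical in
lemma coeff_geomS {σ : Type*} (e b : σ →₀ ℕ) :
    MvPowerSeries.coeff b (geomS e) = if ∃ k : ℕ, b = k • e then 1 else 0 := by
  rw [MvPowerSeries.coeff_apply, geomS]

lemma geomS_mul {σ : Type*} (e : σ →₀ ℕ) (he : e ≠ 0) :
    geomS e * ((1 : MvPowerSeries σ ℚ) - MvPowerSeries.monomial e 1) = 1 := by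
  classical
  ext b
  rw [mul_comm, sub_mul, one_mul, map_sub, coeff_monomial_mul, coeff_geomS]
  by_cases hb : b = 0
  · subst hb
    have h1 : ∃ k : ℕ, (0 : σ →₀ ℕ) = k • e := ⟨0, by simp⟩
    have h2 : ¬ e ≤ 0 := fun h => he (le_antisymm h (by simp))
    simp [h1, h2]
  · rw [coeff_one, if_neg hb]
    by_cases h1 : ∃ k : ℕ, b = k • e
    · obtain ⟨k, hk⟩ := h1
      obtain ⟨k', rfl⟩ : ∃ k', k = k' + 1 := by
        refine ⟨k - 1, ?_⟩
        rcases Nat.eq_zero_or_pos k with h | h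
        · exfalso; apply hb; simp [hk, h]
        · omega
      have hle : e ≤ b := by
        rw [hk, succ_nsmul]; exact le_add_self
      have hsub : b - e = k' • e := by rw [hk, succ_nsmul, add_tsub_cancel_right]
      rw [if_pos ⟨k' + 1, hk⟩, if_pos hle, coeff_geomS, if_pos ⟨k', hsub⟩]
      ring
    · rw [if_neg h1]
      have : ¬ (e ≤ b ∧ ∃ k : ℕ, b - e = k • e) := by
        rintro ⟨hle, k, hk⟩
        exact h1 ⟨k + 1, by rw [succ_nsmul, ← hk, tsub_add_cancel_of_le hle]⟩
      by_cases hle : e ≤ b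
      · rw [if_pos hle, coeff_geomS, if_neg (fun h => this ⟨hle, h⟩)]; ring
      · rw [if_neg hle]; ring

lemma inv_eq_geomS {σ : Type*} [DecidableEq σ] (e : σ →₀ ℕ) (he : e ≠ 0) :
    ((1 : MvPowerSeries σ ℚ) - MvPowerSeries.monomial e 1)⁻¹ = geomS e := by
  rw [MvPowerSeries.inv_eq_iff_mul_eq_one]
  · exact geomS_mul e he
  · rw [map_sub, constantCoeff_one]
    rw [show constantCoeff (MvPowerSeries.monomial e (1 : ℚ)) = 0 from ?_]
    · norm_num
    · rw [← coeff_zero_eq_constantCoeff, coeff_monomial, if_neg (by simpa using (Ne.symm he))]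


/-- Truncation (sufficient for the coefficient at `a`) of the infinite product
`Π_{m=0}^∞ Π_{i,j mod n} (1 - (x_i x_{i+1}⋯x_j)(x_1 x_2⋯x_n)^m)^{-1}`, with variables
indexed by `ZMod n` and cyclic interval products. -/
noncomputable def tupleGF (n : ℕ) [NeZero n] (M : ℕ) : MvPowerSeries (ZMod n) ℚ :=
  ∏ m ∈ Finset.range (M + 1), ∏ i : ZMod n, ∏ j : ZMod n,
    ((1 : MvPowerSeries (ZMod n) ℚ) -
      MvPowerSeries.monomial
        (Finsupp.equivFunOnFinite.symm fun k : ZMod n =>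
          m + if (k - i).val ≤ (j - i).val then 1 else 0)
        1)⁻¹

variable (n : ℕ) [NeZero n]

noncomputable def Ee (m : ℕ) (i j : ZMod n) : ZMod n →₀ ℕ :=
  Finsupp.equivFunOnFinite.symm fun k : ZMod n =>
    m + if (k - i).val ≤ (j - i).val then 1 else 0

lemma Ee_apply (m : ℕ) (i j k : ZMod n) :
    Ee n m i j k = m + if (k - i).val ≤ (j - i).val then 1 else 0 := rfl

lemma Ee_ne_zero (m : ℕ) (i j : ZMod n) : Ee n m i j ≠ 0 := by
  intro h
  have h2 : Ee n m i j i = 0 := by rw [h]; rfl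
  rw [Ee_apply] at h2
  simp at h2

noncomputable def E2 (i : ZMod n) (t : ℕ) : ZMod n →₀ ℕ :=
  Finsupp.equivFunOnFinite.symm fun k : ZMod n =>
    t / n + if (k - i).val ≤ t % n then 1 else 0

lemma E2_apply (i : ZMod n) (t : ℕ) (k : ZMod n) :
    E2 n i t k = t / n + if (k - i).val ≤ t % n then 1 else 0 := rfl

lemma Ee_eq_E2 (m : ℕ) (i j : ZMod n) :
    Ee n m i j = E2 n i (m * n + (j - i).val) := by
  have hv : (j - i).val < n := ZMod.val_lt _
  ext k
  rw [Ee_apply, E2_apply]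
  have h1 : (m * n + (j - i).val) / n = m := by
    rw [Nat.add_comm, Nat.add_mul_div_right _ _ (Nat.pos_of_ne_zero (NeZero.ne n)),
      Nat.div_eq_of_lt hv, Nat.zero_add]
  have h2 : (m * n + (j - i).val) % n = (j - i).val := by
    rw [Nat.add_comm, Nat.add_mul_mod_self_right, Nat.mod_eq_of_lt hv]
  rw [h1, h2]

noncomputable def Sfin (M : ℕ) : Finset (ℕ × ZMod n × ZMod n) :=
  Finset.range (M+1) ×ˢ (Finset.univ ×ˢ Finset.univ)

lemma tupleGF_eq (M : ℕ) :
    tupleGF n M = ∏ s ∈ Sfin n M, geomS (Ee n s.1 s.2.1 s.2.2) := by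
  rw [tupleGF, Sfin, Finset.prod_product]
  apply Finset.prod_congr rfl
  intro m _
  rw [Finset.prod_product]
  apply Finset.prod_congr rfl; intro i _
  apply Finset.prod_congr rfl; intro j _
  exact inv_eq_geomS _ (Ee_ne_zero n m i j)

open scoped Classical in
lemma coeff_tupleGF (M : ℕ) (a : ZMod n →₀ ℕ) :
    MvPowerSeries.coeff a (tupleGF n M)
      = (((finsuppAntidiag (Sfin n M) a).filter
          (fun l => ∀ s ∈ Sfin n M, ∃ k : ℕ, l s = k • Ee n s.1 s.2.1 s.2.2)).card : ℚ) := by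
  rw [tupleGF_eq, MvPowerSeries.coeff_prod, ← Finset.sum_boole]
  apply Finset.sum_congr rfl
  intro l hl
  rw [← Finset.prod_boole]
  apply Finset.prod_congr rfl
  intro s hs
  rw [coeff_geomS]

lemma mem_Sfin (M : ℕ) (s : ℕ × ZMod n × ZMod n) : s ∈ Sfin n M ↔ s.1 ≤ M := by
  simp only [Sfin, Finset.mem_product, Finset.mem_range, Finset.mem_univ, and_true]
  omega

lemma Ee_self_apply (m : ℕ) (i j : ZMod n) : Ee n m i j i = m + 1 := by
  rw [Ee_apply, sub_self, ZMod.val_zero, if_pos (Nat.zero_le _)]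

lemma smul_Ee_div (k m : ℕ) (i j : ZMod n) : (k • Ee n m i j) i / (m + 1) = k := by
  rw [Finsupp.smul_apply, Ee_self_apply, smul_eq_mul, Nat.mul_div_cancel _ (Nat.succ_pos m)]

open scoped Classical in
noncomputable def equiv12 (M : ℕ) (a : ZMod n →₀ ℕ) :
    {l : (ℕ × ZMod n × ZMod n) →₀ (ZMod n →₀ ℕ) //
        l ∈ (finsuppAntidiag (Sfin n M) a).filter
          (fun l => ∀ s ∈ Sfin n M, ∃ k : ℕ, l s = k • Ee n s.1 s.2.1 s.2.2)} ≃
    {c : ℕ × ZMod n × ZMod n → ℕ //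
        (∀ s, M < s.1 → c s = 0) ∧ ∑ s ∈ Sfin n M, c s • Ee n s.1 s.2.1 s.2.2 = a} where
  toFun := fun ⟨l, hl⟩ => by
    rw [Finset.mem_filter, Finset.mem_finsuppAntidiag] at hl
    refine ⟨fun s => (l s) s.2.1 / (s.1 + 1), fun s hs => ?_, ?_⟩
    · have : l s = 0 := Finsupp.notMem_support_iff.mp
        (fun h => by have := hl.1.2 h; rw [mem_Sfin] at this; omega)
      dsimp only
      rw [this]; simp
    · rw [← hl.1.1]
      apply Finset.sum_congr rfl
      intro s hs
      obtain ⟨k, hk⟩ := hl.2 s hs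
      dsimp only
      rw [hk, smul_Ee_div]
  invFun := fun ⟨c, hc⟩ => by
    refine ⟨Finsupp.onFinset (Sfin n M) (fun s => c s • Ee n s.1 s.2.1 s.2.2)
      (fun s hs => ?_), ?_⟩
    · rw [mem_Sfin]
      by_contra h
      exact hs (by rw [hc.1 s (by omega)]; simp)
    · rw [Finset.mem_filter, Finset.mem_finsuppAntidiag]
      refine ⟨⟨?_, Finsupp.support_onFinset_subset⟩, fun s hs => ⟨c s, rfl⟩⟩
      exact (Finset.sum_congr rfl (fun s _ => rfl)).trans hc.2
  left_inv := fun ⟨l, hl⟩ => by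
    rw [Finset.mem_filter, Finset.mem_finsuppAntidiag] at hl
    apply Subtype.ext
    ext s
    simp only [Finsupp.onFinset_apply]
    by_cases hs : s ∈ Sfin n M
    · obtain ⟨k, hk⟩ := hl.2 s hs
      rw [hk, smul_Ee_div]
    · have h0 : l s = 0 := Finsupp.notMem_support_iff.mp (fun h => hs (hl.1.2 h))
      rw [h0]
      simp
  right_inv := fun ⟨c, hc⟩ => by
    apply Subtype.ext
    funext s
    simp only [Finsupp.onFinset_apply]
    rw [smul_Ee_div]

lemma div_mn (m r : ℕ) (hr : r < n) : (m * n + r) / n = m := by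
  rw [Nat.add_comm, Nat.add_mul_div_right _ _ (Nat.pos_of_ne_zero (NeZero.ne n)),
    Nat.div_eq_of_lt hr, Nat.zero_add]

lemma mod_mn (m r : ℕ) (hr : r < n) : (m * n + r) % n = r := by
  rw [Nat.add_comm, Nat.add_mul_mod_self_right, Nat.mod_eq_of_lt hr]

lemma cast_round (m : ℕ) (i j : ZMod n) : i + ((m * n + (j - i).val : ℕ) : ZMod n) = j := by
  push_cast
  rw [ZMod.natCast_self, mul_zero, zero_add, ZMod.natCast_zmod_val, add_sub_cancel]

lemma sum_S {A : Type*} [AddCommMonoid A] (M : ℕ) (G : ZMod n → ℕ → A) :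
    ∑ s ∈ Sfin n M, G s.2.1 (s.1 * n + (s.2.2 - s.2.1).val)
      = ∑ i : ZMod n, ∑ t ∈ Finset.range (n * (M + 1)), G i t := by
  rw [Sfin, Finset.sum_product]
  simp only [Finset.sum_product]
  rw [Finset.sum_comm]
  apply Finset.sum_congr rfl
  intro i _
  rw [← Finset.sum_product']
  refine Finset.sum_bij' (fun p _ => p.1 * n + (p.2 - i).val)
    (fun t _ => (t / n, i + (t : ZMod n))) ?_ ?_ ?_ ?_ ?_
  · intro p hp
    rw [Finset.mem_product, Finset.mem_range] at hp
    rw [Finset.mem_range]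
    have hv := ZMod.val_lt (p.2 - i)
    have : p.1 * n + (p.2 - i).val < (p.1 + 1) * n := by
      rw [Nat.add_mul, Nat.one_mul]; omega
    calc p.1 * n + (p.2 - i).val < (p.1 + 1) * n := this
    _ ≤ (M + 1) * n := Nat.mul_le_mul_right _ (by omega)
    _ = n * (M + 1) := Nat.mul_comm _ _
  · intro t ht
    rw [Finset.mem_range] at ht
    rw [Finset.mem_product, Finset.mem_range]
    constructor
    · rw [Nat.div_lt_iff_lt_mul (Nat.pos_of_ne_zero (NeZero.ne n))]
      rw [Nat.mul_comm] at ht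
      exact ht
    · exact Finset.mem_univ _
  · intro p hp
    rw [Finset.mem_product] at hp
    ext
    · exact div_mn n _ _ (ZMod.val_lt _)
    · exact cast_round n _ _ _
  · intro t ht
    dsimp only
    rw [add_sub_cancel_left, ZMod.val_natCast, Nat.div_add_mod']
  · intro p hp
    rfl

lemma round_trip_t (s : ℕ × ZMod n × ZMod n) :
    ((s.1 * n + (s.2.2 - s.2.1).val) / n, s.2.1,
      s.2.1 + ((s.1 * n + (s.2.2 - s.2.1).val : ℕ) : ZMod n)) = s := by
  ext
  · exact div_mn n _ _ (ZMod.val_lt _)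
  · rfl
  · exact cast_round n _ _ _

noncomputable def equiv23 (M : ℕ) (a : ZMod n →₀ ℕ) :
    {c : ℕ × ZMod n × ZMod n → ℕ //
        (∀ s, M < s.1 → c s = 0) ∧ ∑ s ∈ Sfin n M, c s • Ee n s.1 s.2.1 s.2.2 = a} ≃
    {d : ZMod n → ℕ → ℕ //
        (∀ i t, n * (M + 1) ≤ t → d i t = 0) ∧
        ∑ i : ZMod n, ∑ t ∈ Finset.range (n * (M + 1)), d i t • E2 n i t = a} where
  toFun := fun ⟨c, hc⟩ => by
    refine ⟨fun i t => c (t / n, i, i + (t : ZMod n)), fun i t ht => ?_, ?_⟩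
    · apply hc.1
      dsimp only
      have : M + 1 ≤ t / n := by
        rw [Nat.le_div_iff_mul_le (Nat.pos_of_ne_zero (NeZero.ne n))]
        calc (M + 1) * n = n * (M + 1) := Nat.mul_comm _ _
        _ ≤ t := ht
      omega
    · rw [← sum_S n M (fun i t => c (t / n, i, i + (t : ZMod n)) • E2 n i t)]
      rw [← hc.2]
      apply Finset.sum_congr rfl
      intro s _
      rw [round_trip_t, Ee_eq_E2]
  invFun := fun ⟨d, hd⟩ => by
    refine ⟨fun s => d s.2.1 (s.1 * n + (s.2.2 - s.2.1).val), fun s hs => ?_, ?_⟩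
    · apply hd.1
      calc n * (M + 1) = (M + 1) * n := Nat.mul_comm _ _
      _ ≤ s.1 * n := Nat.mul_le_mul_right _ (by omega)
      _ ≤ s.1 * n + (s.2.2 - s.2.1).val := Nat.le_add_right _ _
    · rw [← hd.2, ← sum_S n M (fun i t => d i t • E2 n i t)]
      apply Finset.sum_congr rfl
      intro s _
      rw [Ee_eq_E2]
  left_inv := fun ⟨c, hc⟩ => by
    apply Subtype.ext
    funext s
    dsimp only
    rw [round_trip_t]
  right_inv := fun ⟨d, hd⟩ => by
    apply Subtype.ext
    funext i t
    dsimp only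
    rw [add_sub_cancel_left, ZMod.val_natCast, Nat.div_add_mod']

lemma count_mod (t v : ℕ) (hv : v < n) :
    (∑ u ∈ Finset.range (t + 1), if u % n = v then 1 else 0)
      = t / n + if v ≤ t % n then 1 else 0 := by
  have hnpos : 0 < n := Nat.pos_of_ne_zero (NeZero.ne n)
  induction t with
  | zero =>
    rw [Finset.sum_range_one]
    simp only [Nat.zero_mod, Nat.zero_div, Nat.zero_add]
    rcases Nat.eq_zero_or_pos v with rfl | hv0
    · simp
    · simp [hv0.ne, hv0.ne', Nat.not_le.mpr hv0]
  | succ t ih =>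
    rw [Finset.sum_range_succ, ih]
    have hd := Nat.div_add_mod t n
    have hr : t % n < n := Nat.mod_lt _ hnpos
    by_cases h : t % n = n - 1
    · have h1 : t + 1 = n * (t / n + 1) := by rw [Nat.mul_add, Nat.mul_one]; omega
      have h2 : (t + 1) % n = 0 := by rw [h1]; exact Nat.mul_mod_right _ _
      have h3 : (t + 1) / n = t / n + 1 := by
        rw [h1]; exact Nat.mul_div_cancel_left _ hnpos
      rw [h2, h3]
      split_ifs <;> omega
    · have h1 : t + 1 = n * (t / n) + (t % n + 1) := by omega
      have h2 : (t + 1) % n = t % n + 1 := by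
        rw [h1, Nat.mul_add_mod, Nat.mod_eq_of_lt (by omega)]
      have h3 : (t + 1) / n = t / n := by
        rw [h1, Nat.mul_add_div hnpos, Nat.div_eq_of_lt (show t % n + 1 < n by omega),
          Nat.add_zero]
      rw [h2, h3]
      split_ifs <;> omega

omit [NeZero n] in
lemma telescope (f : ℕ → ℕ) (hf : Antitone f) (N u : ℕ) :
    (∑ t ∈ Finset.range N, if u ≤ t then f t - f (t + 1) else 0)
      = f (min u N) - f N := by
  induction N with
  | zero => rw [Finset.sum_range_zero, Nat.min_zero, Nat.sub_self]
  | succ N ih =>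
    rw [Finset.sum_range_succ, ih]
    have h1 : f (N + 1) ≤ f N := hf (Nat.le_succ N)
    by_cases h : u ≤ N
    · have h2 : f N ≤ f u := hf h
      rw [min_eq_left h, min_eq_left (by omega), if_pos h]
      omega
    · have hm : min u N = N := min_eq_right (by omega)
      have hm2 : min u (N + 1) = N + 1 := min_eq_right (by omega)
      rw [hm, hm2, if_neg h]
      omega

omit [NeZero n] in
lemma partial_diff (g : ℕ → ℕ) (N t : ℕ) :
    ((∑ t' ∈ Finset.range N, if t ≤ t' then g t' else 0)
      - ∑ t' ∈ Finset.range N, if t + 1 ≤ t' then g t' else 0)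
      = if t < N then g t else 0 := by
  have step : ∀ t' ∈ Finset.range N,
      (if t ≤ t' then g t' else 0)
        = (if t + 1 ≤ t' then g t' else 0) + (if t' = t then g t' else 0) := by
    intro t' _
    split_ifs <;> omega
  rw [Finset.sum_congr rfl step, Finset.sum_add_distrib, Finset.sum_ite_eq' (Finset.range N) t g]
  simp only [Finset.mem_range]
  rw [Nat.add_comm, Nat.add_sub_cancel]

lemma cast_eq_iff (u : ℕ) (x : ZMod n) : ((u : ZMod n) = x) ↔ u % n = x.val := by
  constructor
  · intro h; rw [← h, ZMod.val_natCast]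
  · intro h; rw [← ZMod.natCast_zmod_val x, ← h, ZMod.natCast_mod]

open scoped Classical in
lemma finsum_eval (δ : ZMod n → ℕ → ℕ) (N : ℕ) (h0 : ∀ i u, N ≤ u → δ i u = 0) (k : ZMod n) :
    (∑ᶠ p ∈ {p : ZMod n × ℕ | p.1 + ((p.2 + 1 : ℕ) : ZMod n) = k}, δ p.1 p.2)
      = ∑ i : ZMod n, ∑ u ∈ Finset.range N,
          if i + ((u + 1 : ℕ) : ZMod n) = k then δ i u else 0 := by
  rw [finsum_mem_eq_sum_of_inter_support_eq (fun p : ZMod n × ℕ => δ p.1 p.2)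
    (t := (Finset.univ ×ˢ Finset.range N).filter
      (fun p => p.1 + ((p.2 + 1 : ℕ) : ZMod n) = k))]
  · rw [Finset.sum_filter, Finset.sum_product]
  · ext p
    simp only [Set.mem_inter_iff, Set.mem_setOf_eq, Function.mem_support, Finset.coe_filter,
      Finset.mem_product, Finset.mem_univ, Finset.mem_range, true_and]
    constructor
    · rintro ⟨h1, h2⟩
      exact ⟨⟨by by_contra hc; exact h2 (h0 _ _ (by omega)), h1⟩, h2⟩
    · rintro ⟨⟨_, h1⟩, h2⟩
      exact ⟨h1, h2⟩

open scoped Classical in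
lemma key (N : ℕ) (d : ZMod n → ℕ → ℕ) (k : ZMod n) :
    (∑ j : ZMod n, ∑ u ∈ Finset.range N,
        if j + ((u + 1 : ℕ) : ZMod n) = k
        then (∑ t ∈ Finset.range N, if u ≤ t then d (j + 1) t else 0) else 0)
      = ∑ i : ZMod n, ∑ t ∈ Finset.range N, d i t * E2 n i t k := by
  rw [← Fintype.sum_equiv (Equiv.subRight (1 : ZMod n))
    (fun i => ∑ u ∈ Finset.range N,
        if (i - 1) + ((u + 1 : ℕ) : ZMod n) = k
        then (∑ t ∈ Finset.range N, if u ≤ t then d ((i - 1) + 1) t else 0) else 0)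
    (fun j => ∑ u ∈ Finset.range N,
        if j + ((u + 1 : ℕ) : ZMod n) = k
        then (∑ t ∈ Finset.range N, if u ≤ t then d (j + 1) t else 0) else 0)
    (fun i => rfl)]
  apply Finset.sum_congr rfl
  intro i _
  rw [sub_add_cancel]
  have hcond : ∀ u : ℕ, ((i - 1) + ((u + 1 : ℕ) : ZMod n) = k) ↔ (u % n = (k - i).val) := by
    intro u
    rw [Nat.cast_add, Nat.cast_one]
    have hring : (i - 1) + ((u : ZMod n) + 1) = (u : ZMod n) + i := by ring
    rw [hring, ← eq_sub_iff_add_eq, cast_eq_iff]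
  calc
    (∑ u ∈ Finset.range N,
        if (i - 1) + ((u + 1 : ℕ) : ZMod n) = k
        then (∑ t ∈ Finset.range N, if u ≤ t then d i t else 0) else 0)
      = ∑ u ∈ Finset.range N,
          if u % n = (k - i).val
          then (∑ t ∈ Finset.range N, if u ≤ t then d i t else 0) else 0 := by
        apply Finset.sum_congr rfl
        intro u _
        rw [if_congr (hcond u) rfl rfl]
    _ = ∑ u ∈ Finset.range N, ∑ t ∈ Finset.range N,
          (if u % n = (k - i).val then (if u ≤ t then d i t else 0) else 0) := by
        apply Finset.sum_congr rfl
        intro u _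
        split_ifs with h
        · rfl
        · simp
    _ = ∑ t ∈ Finset.range N, ∑ u ∈ Finset.range N,
          (if u % n = (k - i).val then (if u ≤ t then d i t else 0) else 0) :=
        Finset.sum_comm
    _ = ∑ t ∈ Finset.range N, d i t * E2 n i t k := by
        apply Finset.sum_congr rfl
        intro t ht
        rw [Finset.mem_range] at ht
        have step1 : ∀ u ∈ Finset.range N,
            (if u % n = (k - i).val then (if u ≤ t then d i t else 0) else 0)
              = (if u ≤ t then (if u % n = (k - i).val then d i t else 0) else 0) := by
          intro u _
          split_ifs <;> rfl
        rw [Finset.sum_congr rfl step1]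
        rw [← Finset.sum_subset (Finset.range_subset_range.mpr (show t + 1 ≤ N by omega))
          (fun u _ hu => by
            rw [Finset.mem_range] at hu
            rw [if_neg (by omega)])]
        have step2 : ∀ u ∈ Finset.range (t + 1),
            (if u ≤ t then (if u % n = (k - i).val then d i t else 0) else 0)
              = d i t * (if u % n = (k - i).val then 1 else 0) := by
          intro u hu
          rw [Finset.mem_range] at hu
          rw [if_pos (by omega), mul_ite, mul_one, mul_zero]
        rw [Finset.sum_congr rfl step2, ← Finset.mul_sum,
          count_mod n t (k - i).val (ZMod.val_lt _), E2_apply]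

lemma sum_smul_apply (N : ℕ) (d : ZMod n → ℕ → ℕ) (k : ZMod n) :
    (∑ i : ZMod n, ∑ t ∈ Finset.range N, d i t • E2 n i t) k
      = ∑ i : ZMod n, ∑ t ∈ Finset.range N, d i t * E2 n i t k := by
  simp [Finsupp.coe_finset_sum, Finset.sum_apply, Finsupp.smul_apply, smul_eq_mul]

lemma delta_bound (a : ZMod n →₀ ℕ) (δ : ZMod n → ℕ → ℕ)
    (hA : ∀ i, Antitone (δ i)) (hF : ∀ i, (Function.support (δ i)).Finite)
    (hs : ∀ k : ZMod n,
      (∑ᶠ p ∈ {p : ZMod n × ℕ | p.1 + ((p.2 + 1 : ℕ) : ZMod n) = k}, δ p.1 p.2) = a k) :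
    ∀ i u, (a.sum fun _ v => v) ≤ u → δ i u = 0 := by
  classical
  have hbd : ∀ i : ZMod n, ∃ B, ∀ u, B ≤ u → δ i u = 0 := by
    intro i
    rcases Set.Finite.bddAbove (hF i) with ⟨B, hB⟩
    refine ⟨B + 1, fun u hu => ?_⟩
    by_contra h
    have := hB (Function.mem_support.mpr h)
    omega
  choose B hB using hbd
  set N₀ := Finset.univ.sup B with hN₀def
  have hN₀ : ∀ i u, N₀ ≤ u → δ i u = 0 := fun i u hu =>
    hB i u (le_trans (Finset.le_sup (Finset.mem_univ i)) hu)
  have hM : (a.sum fun _ v => v) = ∑ i : ZMod n, ∑ u ∈ Finset.range N₀, δ i u := by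
    have h1 : (a.sum fun _ v => v) = ∑ k : ZMod n, a k :=
      Finsupp.sum_fintype _ _ (fun _ => rfl)
    have h2 : ∀ k : ZMod n, a k = ∑ i : ZMod n, ∑ u ∈ Finset.range N₀,
        if i + ((u + 1 : ℕ) : ZMod n) = k then δ i u else 0 := fun k => by
      rw [← hs k, finsum_eval n δ N₀ hN₀ k]
    rw [h1, Finset.sum_congr rfl (fun k _ => h2 k), Finset.sum_comm]
    apply Finset.sum_congr rfl
    intro i _
    rw [Finset.sum_comm]
    apply Finset.sum_congr rfl
    intro u _
    exact Fintype.sum_ite_eq (i + ((u + 1 : ℕ) : ZMod n)) (fun _ => δ i u)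
  intro i u hu
  by_contra h
  have h1 : ∀ u' ≤ u, 1 ≤ δ i u' := fun u' h' =>
    Nat.one_le_iff_ne_zero.mpr (fun h0 => h (Nat.le_antisymm (h0 ▸ hA i h') (Nat.zero_le _)))
  have hu0 : u < N₀ := by
    by_contra hc
    exact h (hN₀ i u (by omega))
  have hfin : u + 1 ≤ (a.sum fun _ v => v) := by
    rw [hM]
    calc u + 1 = ∑ _u' ∈ Finset.range (u + 1), 1 := by simp
    _ ≤ ∑ u' ∈ Finset.range (u + 1), δ i u' :=
        Finset.sum_le_sum (fun u' hu' => h1 u' (by rw [Finset.mem_range] at hu'; omega))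
    _ ≤ ∑ u' ∈ Finset.range N₀, δ i u' :=
        Finset.sum_le_sum_of_subset (Finset.range_subset_range.mpr (by omega))
    _ ≤ ∑ i' : ZMod n, ∑ u' ∈ Finset.range N₀, δ i' u' :=
        Finset.single_le_sum (f := fun i' : ZMod n => ∑ u' ∈ Finset.range N₀, δ i' u')
          (fun _ _ => Nat.zero_le _) (Finset.mem_univ i)
  omega

lemma reconstruct (δ : ZMod n → ℕ → ℕ) (hA : ∀ i, Antitone (δ i)) (N : ℕ)
    (h0 : ∀ i u, N ≤ u → δ i u = 0) (j : ZMod n) (u : ℕ) :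
    (∑ t ∈ Finset.range N, if u ≤ t then δ j t - δ j (t + 1) else 0) = δ j u := by
  rw [telescope (δ j) (hA j) N u]
  rcases le_or_gt u N with h | h
  · rw [min_eq_left h, h0 j N le_rfl, Nat.sub_zero]
  · rw [min_eq_right h.le, h0 j N le_rfl, h0 j u (by omega)]

open scoped Classical in
noncomputable def equiv34 (a : ZMod n →₀ ℕ) :
    {d : ZMod n → ℕ → ℕ //
        (∀ i t, n * ((a.sum fun _ v => v) + 1) ≤ t → d i t = 0) ∧
        ∑ i : ZMod n, ∑ t ∈ Finset.range (n * ((a.sum fun _ v => v) + 1)),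
          d i t • E2 n i t = a} ≃
    {δ : ZMod n → ℕ → ℕ //
        (∀ i, Antitone (δ i)) ∧ (∀ i, (Function.support (δ i)).Finite) ∧
        ∀ k : ZMod n,
          (∑ᶠ p ∈ {p : ZMod n × ℕ | p.1 + ((p.2 + 1 : ℕ) : ZMod n) = k}, δ p.1 p.2)
            = a k} where
  toFun := fun ⟨d, hd⟩ => by
    refine ⟨fun j u => ∑ t ∈ Finset.range (n * ((a.sum fun _ v => v) + 1)),
        if u ≤ t then d (j + 1) t else 0, ?_, ?_, ?_⟩
    · intro j u v huv
      apply Finset.sum_le_sum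
      intro t _
      split_ifs <;> omega
    · intro j
      apply Set.Finite.subset (Set.finite_Iio (n * ((a.sum fun _ v => v) + 1)))
      intro u hu
      rw [Function.mem_support] at hu
      rw [Set.mem_Iio]
      by_contra hc
      apply hu
      apply Finset.sum_eq_zero
      intro t ht
      rw [Finset.mem_range] at ht
      rw [if_neg (by omega)]
    · intro k
      have hvanish : ∀ j u, (n * ((a.sum fun _ v => v) + 1)) ≤ u →
          (∑ t ∈ Finset.range (n * ((a.sum fun _ v => v) + 1)),
            if u ≤ t then d (j + 1) t else 0) = 0 := by
        intro j u hu
        apply Finset.sum_eq_zero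
        intro t ht
        rw [Finset.mem_range] at ht
        rw [if_neg (by omega)]
      rw [finsum_eval n _ (n * ((a.sum fun _ v => v) + 1)) hvanish k,
        key n (n * ((a.sum fun _ v => v) + 1)) d k,
        ← sum_smul_apply n (n * ((a.sum fun _ v => v) + 1)) d k, hd.2]
  invFun := fun ⟨δ, hδ⟩ => by
    have hMb : ∀ i u, (a.sum fun _ v => v) ≤ u → δ i u = 0 :=
      delta_bound n a δ hδ.1 hδ.2.1 hδ.2.2
    have hMN : (a.sum fun _ v => v) ≤ n * ((a.sum fun _ v => v) + 1) := by
      have h1 : 1 ≤ n := Nat.pos_of_ne_zero (NeZero.ne n)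
      calc (a.sum fun _ v => v) ≤ (a.sum fun _ v => v) + 1 := Nat.le_succ _
      _ = 1 * ((a.sum fun _ v => v) + 1) := (Nat.one_mul _).symm
      _ ≤ n * ((a.sum fun _ v => v) + 1) := Nat.mul_le_mul_right _ h1
    have hNb : ∀ i u, (n * ((a.sum fun _ v => v) + 1)) ≤ u → δ i u = 0 :=
      fun i u hu => hMb i u (by omega)
    refine ⟨fun i t => δ (i - 1) t - δ (i - 1) (t + 1), fun i t ht => ?_, ?_⟩
    · show δ (i - 1) t - δ (i - 1) (t + 1) = 0
      rw [hMb _ t (by omega), hMb _ (t + 1) (by omega)]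
    · apply Finsupp.ext
      intro k
      rw [sum_smul_apply n (n * ((a.sum fun _ v => v) + 1)) _ k,
        ← key n (n * ((a.sum fun _ v => v) + 1)) _ k, ← hδ.2.2 k,
        finsum_eval n δ (n * ((a.sum fun _ v => v) + 1)) hNb k]
      apply Finset.sum_congr rfl
      intro j _
      apply Finset.sum_congr rfl
      intro u _
      apply if_congr Iff.rfl _ rfl
      rw [← reconstruct n δ hδ.1 (n * ((a.sum fun _ v => v) + 1)) hNb j u]
      apply Finset.sum_congr rfl
      intro t _
      apply if_congr Iff.rfl _ rfl
      show δ (j + 1 - 1) t - δ (j + 1 - 1) (t + 1) = δ j t - δ j (t + 1)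
      rw [add_sub_cancel_right]
  left_inv := fun ⟨d, hd⟩ => by
    apply Subtype.ext
    funext i t
    show (∑ t' ∈ Finset.range (n * ((a.sum fun _ v => v) + 1)),
        if t ≤ t' then d (i - 1 + 1) t' else 0)
      - (∑ t' ∈ Finset.range (n * ((a.sum fun _ v => v) + 1)),
        if t + 1 ≤ t' then d (i - 1 + 1) t' else 0) = d i t
    rw [sub_add_cancel, partial_diff]
    by_cases h : t < n * ((a.sum fun _ v => v) + 1)
    · rw [if_pos h]
    · rw [if_neg h, hd.1 i t (by omega)]
  right_inv := fun ⟨δ, hδ⟩ => by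
    apply Subtype.ext
    funext j u
    have hMb : ∀ i u, (a.sum fun _ v => v) ≤ u → δ i u = 0 :=
      delta_bound n a δ hδ.1 hδ.2.1 hδ.2.2
    have hMN : (a.sum fun _ v => v) ≤ n * ((a.sum fun _ v => v) + 1) := by
      have h1 : 1 ≤ n := Nat.pos_of_ne_zero (NeZero.ne n)
      calc (a.sum fun _ v => v) ≤ (a.sum fun _ v => v) + 1 := Nat.le_succ _
      _ = 1 * ((a.sum fun _ v => v) + 1) := (Nat.one_mul _).symm
      _ ≤ n * ((a.sum fun _ v => v) + 1) := Nat.mul_le_mul_right _ h1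
    have hNb : ∀ i u', (n * ((a.sum fun _ v => v) + 1)) ≤ u' → δ i u' = 0 :=
      fun i u' hu' => hMb i u' (by omega)
    show (∑ t ∈ Finset.range (n * ((a.sum fun _ v => v) + 1)),
        if u ≤ t then δ (j + 1 - 1) t - δ (j + 1 - 1) (t + 1) else 0) = δ j u
    rw [← reconstruct n δ hδ.1 (n * ((a.sum fun _ v => v) + 1)) hNb j u]
    apply Finset.sum_congr rfl
    intro t _
    apply if_congr Iff.rfl _ rfl
    show δ (j + 1 - 1) t - δ (j + 1 - 1) (t + 1) = δ j t - δ j (t + 1)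
    rw [add_sub_cancel_right]

/-- The generating function of `n`-tuples of partitions `(δ_1, …, δ_n)` weighted by
`Π_k x_k^{a_k}` with `a_k = Σ_{i+j ≡ k mod n} δ_i^{(j)}` (superscripts `j ≥ 1`) equals
`Π_{m=0}^∞ Π_{i,j mod n} (1 - (x_i x_{i+1}⋯x_j)(x_1⋯x_n)^m)^{-1}`, coefficientwise: the
coefficient at `a` of a sufficiently deep truncation counts such tuples. Here
`δ i j'` encodes the part `δ_i^{(j'+1)}` of the paper. -/
theorem stmt_19 (n : ℕ) [NeZero n] (hn : 1 ≤ n) (a : ZMod n →₀ ℕ) :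
    MvPowerSeries.coeff a (tupleGF n (a.sum fun _ v => v))
      = (Nat.card {δ : ZMod n → ℕ → ℕ //
          (∀ i, Antitone (δ i)) ∧ (∀ i, (Function.support (δ i)).Finite) ∧
          ∀ k : ZMod n,
            (∑ᶠ p ∈ {p : ZMod n × ℕ | p.1 + ((p.2 + 1 : ℕ) : ZMod n) = k}, δ p.1 p.2)
              = a k} : ℚ) := by
  rw [coeff_tupleGF n (a.sum fun _ v => v) a]
  have hcard := Nat.card_congr ((equiv12 n (a.sum fun _ v => v) a).trans
    ((equiv23 n (a.sum fun _ v => v) a).trans (equiv34 n a)))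
  rw [Nat.card_eq_fintype_card, Fintype.card_coe] at hcard
  rw [← hcard]
end
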